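/- arXiv:math/9805145 — 6 statements merged into one kernel-verified Lean document; each statement's English description precedes it below -/
import Mathlib

section
/- Let κ be an infinite set, D an ultrafilter on κ, and B_i (i ∈ κ) Boolean algebras. Then |∏_{i∈κ} Length⁺(B_i)/D| ≤ Length⁺(∏_{i∈κ} B_i/D), where ∏_{i∈κ} Length⁺(B_i)/D denotes the set-ultraproduct of the cardinals Length⁺(B_i). -/
open Cardinal Filter

universe u

namespace ShSi641

variable {ι : Type u}

/-- The set-theoretic ultraproduct `∏_{i} B i / D`. -/
def UProd (D : Ultrafilter ι) (B : ι → Type u) : Type u :=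
  Quotient ((D : Filter ι).productSetoid B)

namespace UProd

variable {D : Ultrafilter ι} {B : ι → Type u}

/-- The equivalence class `f/D` of `f ∈ ∏_i B i`. -/
def mk (D : Ultrafilter ι) (f : ∀ i, B i) : UProd D B :=
  Quotient.mk ((D : Filter ι).productSetoid B) f

@[elab_as_elim]
theorem ind {motive : UProd D B → Prop} (h : ∀ f : ∀ i, B i, motive (mk D f)) :
    ∀ x : UProd D B, motive x :=
  Quotient.ind h

/-- Lift of a family of binary relations to the ultraproduct. -/
def uRel (D : Ultrafilter ι) {B : ι → Type u} (r : ∀ i, B i → B i → Prop) :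
    UProd D B → UProd D B → Prop :=
  Quotient.lift₂ (fun f g => ∀ᶠ i in (D : Filter ι), r i (f i) (g i))
    (fun _ _ _ _ hf hg => propext <| eventually_congr <|
      (hf.and hg).mono fun _ ⟨hf', hg'⟩ => by rw [hf', hg'])

theorem uRel_mk {r : ∀ i, B i → B i → Prop} {f g : ∀ i, B i} :
    uRel D r (mk D f) (mk D g) ↔ ∀ᶠ i in (D : Filter ι), r i (f i) (g i) :=
  Iff.rfl

section BA

variable [∀ i, BooleanAlgebra (B i)]

/-- Pointwise binary operations descend to the ultraproduct. -/
def map₂ (op : ∀ i, B i → B i → B i) : UProd D B → UProd D B → UProd D B :=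
  Quotient.map₂ (fun f g i => op i (f i) (g i))
    (fun _ _ hf _ _ hg => (hf.and hg).mono fun _ ⟨hf', hg'⟩ => by
      dsimp only; rw [hf', hg'])

def map₁ (op : ∀ i, B i → B i) : UProd D B → UProd D B :=
  Quotient.map (fun f i => op i (f i))
    (fun _ _ hf => hf.mono fun _ hf' => by dsimp only; rw [hf'])

instance instPartialOrder : PartialOrder (UProd D B) where
  le := uRel D fun _ x y => x ≤ y
  le_refl x := ind (fun f => Eventually.of_forall fun i => le_refl (f i)) x
  le_trans x y z := Quotient.inductionOn₃ x y z fun _ _ _ h1 h2 =>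
    (h1.and h2).mono fun _ ⟨a, b⟩ => a.trans b
  le_antisymm x y := Quotient.inductionOn₂ x y fun _ _ h1 h2 =>
    Quotient.sound <| (h1.and h2).mono fun _ ⟨a, b⟩ => le_antisymm a b

instance instBooleanAlgebra : BooleanAlgebra (UProd D B) where
  sup := map₂ fun _ x y => x ⊔ y
  inf := map₂ fun _ x y => x ⊓ y
  compl := map₁ fun _ x => xᶜ
  sdiff := map₂ fun _ x y => x \ y
  himp := map₂ fun _ x y => x ⇨ y
  top := mk D fun _ => ⊤
  bot := mk D fun _ => ⊥
  le_sup_left x y := Quotient.inductionOn₂ x y fun _ _ =>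
    Eventually.of_forall fun _ => le_sup_left
  le_sup_right x y := Quotient.inductionOn₂ x y fun _ _ =>
    Eventually.of_forall fun _ => le_sup_right
  sup_le x y z := Quotient.inductionOn₃ x y z fun _ _ _ h1 h2 =>
    (h1.and h2).mono fun _ ⟨a, b⟩ => sup_le a b
  inf_le_left x y := Quotient.inductionOn₂ x y fun _ _ =>
    Eventually.of_forall fun _ => inf_le_left
  inf_le_right x y := Quotient.inductionOn₂ x y fun _ _ =>
    Eventually.of_forall fun _ => inf_le_right
  le_inf x y z := Quotient.inductionOn₃ x y z fun _ _ _ h1 h2 =>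
    (h1.and h2).mono fun _ ⟨a, b⟩ => le_inf a b
  le_sup_inf x y z := Quotient.inductionOn₃ x y z fun _ _ _ =>
    Eventually.of_forall fun _ => le_sup_inf
  inf_compl_le_bot x := ind (fun _ => Eventually.of_forall fun _ => inf_compl_eq_bot.le) x
  top_le_sup_compl x := ind (fun _ => Eventually.of_forall fun _ => sup_compl_eq_top.ge) x
  le_top x := ind (fun _ => Eventually.of_forall fun _ => le_top) x
  bot_le x := ind (fun _ => Eventually.of_forall fun _ => bot_le) x
  sdiff_eq x y := Quotient.inductionOn₂ x y fun _ _ =>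
    Quotient.sound <| Eventually.of_forall fun _ => sdiff_eq
  himp_eq x y := Quotient.inductionOn₂ x y fun _ _ =>
    Quotient.sound <| Eventually.of_forall fun _ => himp_eq

end BA

end UProd

/-- `Length(B)`: the sup of cardinalities of subsets of `B` linearly ordered
by the Boolean partial order. -/
noncomputable def baLength (B : Type u) [BooleanAlgebra B] : Cardinal.{u} :=
  ⨆ X : {X : Set B // IsChain (· ≤ ·) X}, #X.1

/-- `Length⁺(B)`: the sup of the cardinal successors of cardinalities of subsets of `B`
linearly ordered by the Boolean partial order. -/
noncomputable def baLengthPlus (B : Type u) [BooleanAlgebra B] : Cardinal.{u} :=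
  ⨆ X : {X : Set B // IsChain (· ≤ ·) X}, Order.succ #X.1


/-- A cardinal is weakly inaccessible if it is an uncountable regular limit cardinal. -/
def IsWeaklyInaccessible (c : Cardinal.{u}) : Prop :=
  Cardinal.aleph0 < c ∧ c.IsRegular ∧ Order.IsSuccLimit c

/-- A (strict) order is `λ`-like if its carrier has cardinality `λ` while every
proper initial segment has cardinality `< λ`. -/
def IsLambdaLike {α : Type u} (r : α → α → Prop) (lam : Cardinal.{u}) : Prop :=
  #α = lam ∧ ∀ x : α, #{y : α // r y x} < lam

/-- An antichain of a Boolean algebra: a set of pairwise disjoint nonzero elements. -/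
def IsBAAntichain {B : Type u} [BooleanAlgebra B] (X : Set B) : Prop :=
  (∀ x ∈ X, x ≠ ⊥) ∧ X.Pairwise fun x y => x ⊓ y = ⊥

/-- The cellularity `c(B)` of a Boolean algebra. -/
noncomputable def baCellularity (B : Type u) [BooleanAlgebra B] : Cardinal.{u} :=
  ⨆ X : {X : Set B // IsBAAntichain X}, #X.1

/-- `c⁺(B)`, the sup of successors of cardinalities of antichains. -/
noncomputable def baCellularityPlus (B : Type u) [BooleanAlgebra B] : Cardinal.{u} :=
  ⨆ X : {X : Set B // IsBAAntichain X}, Order.succ #X.1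

/-- A subset of a Boolean algebra which is well-ordered by the Boolean order. -/
def IsWellOrderedChain {B : Type u} [BooleanAlgebra B] (X : Set B) : Prop :=
  IsChain (· ≤ ·) X ∧ X.WellFoundedOn (· < ·)

/-- The depth of a Boolean algebra. -/
noncomputable def baDepth (B : Type u) [BooleanAlgebra B] : Cardinal.{u} :=
  ⨆ X : {X : Set B // IsWellOrderedChain X}, #X.1

/-- `Depth⁺(B)`. -/
noncomputable def baDepthPlus (B : Type u) [BooleanAlgebra B] : Cardinal.{u} :=
  ⨆ X : {X : Set B // IsWellOrderedChain X}, Order.succ #X.1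

/-- The set `S` is a subalgebra of the Boolean algebra `B` (as a set). -/
def IsSubalgebraSet {B : Type u} [BooleanAlgebra B] (S : Set B) : Prop :=
  ⊥ ∈ S ∧ ⊤ ∈ S ∧ (∀ x ∈ S, xᶜ ∈ S) ∧ (∀ x ∈ S, ∀ y ∈ S, x ⊔ y ∈ S) ∧
    ∀ x ∈ S, ∀ y ∈ S, x ⊓ y ∈ S

/-- `C` is a closed unbounded subset of the ordinal `l`. -/
def ClubIn (C : Set Ordinal.{u}) (l : Ordinal.{u}) : Prop :=
  C ⊆ Set.Iio l ∧ (∀ α < l, ∃ β ∈ C, α ≤ β) ∧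
    ∀ δ < l, δ ≠ 0 → (∀ α < δ, ∃ β ∈ C, α ≤ β ∧ β < δ) → δ ∈ C

/-- `S` is a stationary subset of the ordinal `l`: it meets every club of `l`. -/
def StationaryIn (S : Set Ordinal.{u}) (l : Ordinal.{u}) : Prop :=
  ∀ C, ClubIn C l → (S ∩ C).Nonempty


section Aux

open Set

/-- Key combinatorial lemma: a linear order all of whose proper initial segments have
cardinality `< C` has cardinality `≤ C`. -/
theorem card_le_of_iio_lt {α : Type u} [LinearOrder α] {C : Cardinal.{u}}
    (h : ∀ x : α, #{y : α // y < x} < C) : #α ≤ C := by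
  by_contra hlt
  push_neg at hlt
  rcases lt_or_ge C ℵ₀ with hC | hC
  · obtain ⟨n, rfl⟩ := Cardinal.lt_aleph0.mp hC
    have hn1 : ((n + 1 : ℕ) : Cardinal) ≤ #α := by
      have h' := Order.succ_le_of_lt hlt
      rw [← Cardinal.nat_succ] at h'
      exact_mod_cast h'
    have hulift : #(ULift.{u} (Fin (n + 1))) = ((n + 1 : ℕ) : Cardinal) := by
      simp [Cardinal.mk_fintype]
    rw [← hulift, Cardinal.le_def] at hn1
    obtain ⟨j'⟩ := hn1
    set j : Fin (n + 1) ↪ α := (Equiv.ulift.{u}.symm.toEmbedding).trans j' with hj_def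
    set s : Finset α := Finset.univ.image j with hs_def
    have hcard : s.card = n + 1 := by
      rw [hs_def, Finset.card_image_of_injective _ j.injective, Finset.card_univ,
        Fintype.card_fin]
    have hs : s.Nonempty := by rw [← Finset.card_pos, hcard]; omega
    set m := s.max' hs with hm
    have hsub : (↑(s.erase m) : Set α) ⊆ {y : α | y < m} := by
      intro x hx
      rcases Finset.mem_erase.mp (by exact_mod_cast hx) with ⟨hne, hmem⟩
      exact lt_of_le_of_ne (Finset.le_max' s x hmem) hne
    have hge : (n : Cardinal) ≤ #{y : α // y < m} := by
      have h1 : ((s.erase m).card : Cardinal) = (n : Cardinal) := by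
        rw [Finset.card_erase_of_mem (s.max'_mem hs), hcard]; simp
      calc (n : Cardinal) = #(↑(s.erase m) : Set α) := by
            simp only [Finset.coe_sort_coe, Cardinal.mk_coe_finset, h1]
            exact h1.symm
        _ ≤ #{y : α | y < m} := Cardinal.mk_le_mk_of_subset hsub
        _ = #{y : α // y < m} := rfl
    exact absurd (h m) (not_lt.mpr hge)
  · set μ := Order.succ C with hμ
    have hCμ : C < μ := Order.lt_succ C
    have hreg : μ.IsRegular := Cardinal.isRegular_succ hC
    have hμα : μ ≤ #α := Order.succ_le_of_lt hlt
    have hT : #μ.ord.ToType = μ := by rw [Cardinal.mk_toType, Cardinal.card_ord]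
    obtain ⟨j⟩ : Nonempty (μ.ord.ToType ↪ α) := by
      rw [← Cardinal.le_def, hT]; exact hμα
    set R : μ.ord.ToType → μ.ord.ToType → Prop := (· < ·) with hR
    haveI hwo : IsWellOrder μ.ord.ToType R := isWellOrder_lt
    have htype : @Ordinal.type _ R hwo = μ.ord := Ordinal.type_toType μ.ord
    -- every element of T has ≤ C predecessors
    have hpred : ∀ b : μ.ord.ToType, #{a : μ.ord.ToType // a < b} ≤ C := by
      intro b
      have h1 : (@Ordinal.typein _ R hwo b).card < μ := by
        rw [← Cardinal.lt_ord]
        exact (Ordinal.typein_lt_type R b).trans_eq htype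
      have h2 : #{a : μ.ord.ToType // R a b} = (@Ordinal.typein _ R hwo b).card :=
        @Ordinal.card_typein _ R hwo b
      have h3 : #{a : μ.ord.ToType // R a b} < μ := h2 ▸ h1
      exact Order.lt_succ_iff.mp h3
    -- small subsets of T are bounded
    have hbdd : ∀ S : Set μ.ord.ToType, #S ≤ C → ∃ z, ∀ x ∈ S, x < z := by
      intro S hS
      have hlt2 : #S < Ordinal.cof (@Ordinal.type _ R hwo) := by
        rw [htype]
        exact lt_of_le_of_lt hS (hCμ.trans_eq hreg.cof_eq.symm)
      by_contra hcon
      push_neg at hcon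
      rw [htype, ← Ordinal.cof_toType] at hlt2
      exact absurd (Order.cof_le (s := S) fun a => hcon a) (not_le.mpr hlt2)
    -- pressing-up function
    have hU : ∀ b : μ.ord.ToType, ∃ z, ∀ a, j a ≤ j b → a < z := by
      intro b
      refine hbdd {a | j a ≤ j b} ?_
      have hsplit : {a : μ.ord.ToType | j a ≤ j b} ⊆
          {a | j a < j b} ∪ {a | a = b} := by
        intro a ha
        rcases lt_or_eq_of_le (ha : j a ≤ j b) with h' | h'
        · exact Or.inl h'
        · exact Or.inr (j.injective h')
      calc #{a : μ.ord.ToType | j a ≤ j b}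
          ≤ #({a : μ.ord.ToType | j a < j b} ∪ {a | a = b} : Set _) :=
            Cardinal.mk_le_mk_of_subset hsplit
        _ ≤ #{a : μ.ord.ToType | j a < j b} + #({a : μ.ord.ToType | a = b}) :=
            Cardinal.mk_union_le _ _
        _ ≤ C + 1 := by
            have hinj : Function.Injective
                (fun a : {a : μ.ord.ToType | j a < j b} => (⟨j a, a.2⟩ : {y : α // y < j b})) := by
              intro a a' ha
              exact Subtype.ext (j.injective (congrArg Subtype.val ha))
            have h1 : #{a : μ.ord.ToType | j a < j b} ≤ C :=
              (Cardinal.mk_le_of_injective hinj).trans (h (j b)).le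
            have h2 : #({a : μ.ord.ToType | a = b}) ≤ 1 := by simp
            exact add_le_add h1 h2
        _ ≤ C := by
            have : C + 1 ≤ C + C := add_le_add le_rfl (Cardinal.one_le_aleph0.trans hC)
            rwa [Cardinal.add_eq_self hC] at this
    choose u hu using hU
    -- next function
    have hnext : ∀ x : μ.ord.ToType, ∃ z, x < z ∧ ∀ b, b < x → u b < z := by
      intro x
      have hcc : #(insert x (u '' {b : μ.ord.ToType | b < x}) : Set _) ≤ C := by
        calc #(insert x (u '' {b : μ.ord.ToType | b < x}) : Set _)
            ≤ #(u '' {b : μ.ord.ToType | b < x}) + 1 := Cardinal.mk_insert_le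
          _ ≤ C + 1 := by
              refine add_le_add ?_ le_rfl
              exact (Cardinal.mk_image_le).trans (hpred x)
          _ ≤ C := by
              have : C + 1 ≤ C + C := add_le_add le_rfl (Cardinal.one_le_aleph0.trans hC)
              rwa [Cardinal.add_eq_self hC] at this
      obtain ⟨z, hz⟩ := hbdd _ hcc
      exact ⟨z, hz x (mem_insert _ _), fun b hb => hz _ (mem_insert_of_mem _ ⟨b, hb, rfl⟩)⟩
    choose nxt hnxt1 hnxt2 using hnext
    -- starting point with C-many predecessors
    have hCord : C.ord < @Ordinal.type _ R hwo := by
      rw [htype]; exact Cardinal.ord_lt_ord.mpr hCμ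
    set d0 : μ.ord.ToType := Ordinal.enum R ⟨C.ord, hCord⟩ with hd0_def
    have hd0 : C ≤ #{a : μ.ord.ToType // a < d0} := by
      have h2 : #{a : μ.ord.ToType // R a d0} = (@Ordinal.typein _ R hwo d0).card :=
        @Ordinal.card_typein _ R hwo d0
      have h3 : (@Ordinal.typein _ R hwo d0).card = C := by
        rw [hd0_def, Ordinal.typein_enum, Cardinal.card_ord]
      exact le_of_eq (h3 ▸ h2).symm
    set d : ℕ → μ.ord.ToType := fun n => nxt^[n] d0 with hd_def
    have hd_succ : ∀ n, d (n + 1) = nxt (d n) := fun n => Function.iterate_succ_apply' _ _ _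
    -- least strict upper bound of range d
    set W := {z : μ.ord.ToType | ∀ n, d n < z} with hW_def
    have hWne : W.Nonempty := by
      have hr : #(Set.range d) ≤ C := (Set.countable_range d).le_aleph0.trans hC
      obtain ⟨z, hz⟩ := hbdd (Set.range d) hr
      exact ⟨z, fun n => hz _ ⟨n, rfl⟩⟩
    set δ := (IsWellFounded.wf (α := μ.ord.ToType) (r := (· < ·))).min W hWne with hδ_def
    have hδW : δ ∈ W := WellFounded.min_mem _ W hWne
    have hclose : ∀ b, b < δ → u b < δ := by
      intro b hb
      have hbW : b ∉ W := fun hbW => WellFounded.not_lt_min _ W hbW hb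
      rw [hW_def] at hbW
      simp only [Set.mem_setOf_eq, not_forall, not_lt] at hbW
      obtain ⟨n, hn⟩ := hbW
      have h1 : b < d (n + 1) := lt_of_le_of_lt hn (by rw [hd_succ]; exact hnxt1 (d n))
      have h2 : u b < d (n + 2) := by rw [hd_succ]; exact hnxt2 (d (n + 1)) b h1
      exact h2.trans (hδW (n + 2))
    have hjlt : ∀ b, b < δ → j b < j δ := by
      intro b hb
      by_contra hle
      push_neg at hle
      exact absurd ((hu b δ hle).trans_le (hclose b hb).le) (lt_irrefl δ)
    have hfinal : C ≤ #{y : α // y < j δ} := by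
      refine hd0.trans (Cardinal.mk_le_of_injective
        (f := fun a : {a : μ.ord.ToType // a < d0} =>
          (⟨j a, hjlt a ((a.2.trans (hδW 0)))⟩ : {y : α // y < j δ})) ?_)
      intro a a' ha
      exact Subtype.ext (j.injective (congrArg Subtype.val ha))
    exact absurd (h (j δ)) (not_lt.mpr hfinal)

/-- Every type carries a linear order in which every initial segment is small. -/
theorem exists_goodOrder (α : Type u) :
    ∃ l : LinearOrder α, ∀ x : α, #{y : α // l.lt y x} < #α := by
  have hmk : #α = #(#α).ord.ToType := by
    rw [Cardinal.mk_toType, Cardinal.card_ord]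
  have e : α ≃ (#α).ord.ToType := Classical.choice (Cardinal.eq.mp hmk)
  refine ⟨LinearOrder.lift' e e.injective, fun x => ?_⟩
  letI l : LinearOrder α := LinearOrder.lift' e e.injective
  have hinj : Function.Injective
      (fun y : {y : α // l.lt y x} => (⟨e y.1, ?_⟩ : {z : (#α).ord.ToType // z < e x})) := ?_
  · calc #{y : α // l.lt y x} ≤ #{z : (#α).ord.ToType // z < e x} :=
        Cardinal.mk_le_of_injective hinj
      _ < #α := Cardinal.mk_Iio_ord_toType (e x)
  · have h1 : e y.1 ≤ e x ∧ ¬ e x ≤ e y.1 := lt_iff_le_not_ge.mp y.2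
    exact lt_iff_le_not_ge.mpr h1
  · intro y y' h
    exact Subtype.ext (e.injective (congrArg Subtype.val h))

theorem one_lt_baLengthPlus (B : Type u) [BooleanAlgebra B] :
    (1 : Cardinal) < baLengthPlus B := by
  have h1 : Order.succ #(↥({⊥} : Set B)) ≤ baLengthPlus B :=
    le_ciSup (Cardinal.bddAbove_range _)
      (⟨({⊥} : Set B), IsChain.singleton⟩ : {X : Set B // IsChain (· ≤ ·) X})
  have h2 : #(↥({⊥} : Set B)) = 1 := Cardinal.mk_singleton _
  calc (1 : Cardinal) = #(↥({⊥} : Set B)) := h2.symm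
    _ < Order.succ #(↥({⊥} : Set B)) := Order.lt_succ _
    _ ≤ baLengthPlus B := h1

theorem exists_chain_of_lt (B : Type u) [BooleanAlgebra B] {ν : Cardinal.{u}}
    (hν : ν < baLengthPlus B) : ∃ X : Set B, IsChain (· ≤ ·) X ∧ ν ≤ #X := by
  haveI : Nonempty {X : Set B // IsChain (· ≤ ·) X} := ⟨⟨∅, Set.pairwise_empty _⟩⟩
  have : ∃ Xc : {X : Set B // IsChain (· ≤ ·) X}, ν < Order.succ #Xc.1 := by
    by_contra hcon
    push_neg at hcon
    have : baLengthPlus B ≤ ν := ciSup_le hcon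
    exact absurd hν (not_lt.mpr this)
  obtain ⟨Xc, hXc⟩ := this
  exact ⟨Xc.1, Xc.2, Order.lt_succ_iff.mp hXc⟩

/-- The linear order on an ultraproduct of linear orders. -/
noncomputable def uLO (D : Ultrafilter ι) (B : ι → Type u) [∀ i, LinearOrder (B i)] :
    LinearOrder (UProd D B) where
  le := UProd.uRel D fun _ x y => x ≤ y
  le_refl x := UProd.ind (fun f => Eventually.of_forall fun i => le_refl (f i)) x
  le_trans x y z := Quotient.inductionOn₃ x y z fun _ _ _ h1 h2 =>
    (h1.and h2).mono fun _ ⟨a, b⟩ => a.trans b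
  le_antisymm x y := Quotient.inductionOn₂ x y fun _ _ h1 h2 =>
    Quotient.sound <| (h1.and h2).mono fun _ ⟨a, b⟩ => le_antisymm a b
  le_total x y := Quotient.inductionOn₂ x y fun f g => by
    rcases Ultrafilter.mem_or_compl_mem D {i | f i ≤ g i} with h | h
    · exact Or.inl h
    · exact Or.inr (Filter.mem_of_superset h fun i hi => le_of_not_ge hi)
  toDecidableLE := fun _ _ => Classical.dec _

end Aux

/-- `|∏ Length⁺(B_i) / D| ≤ Length⁺(∏ B_i / D)`. -/
theorem statement_1 {ι : Type u} [Infinite ι] (D : Ultrafilter ι)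
    (B : ι → Type u) [∀ i, BooleanAlgebra (B i)] :
    #(UProd D fun i => (baLengthPlus (B i)).out) ≤ baLengthPlus (UProd D B) := by
  classical
  set O : ι → Type u := fun i => (baLengthPlus (B i)).out with hO
  have hmkO : ∀ i, #(O i) = baLengthPlus (B i) := fun i => Cardinal.mk_out _
  choose lo hlo using fun i => exists_goodOrder (O i)
  letI : ∀ i, LinearOrder (O i) := lo
  letI : LinearOrder (UProd D O) := uLO D O
  set lam := baLengthPlus (UProd D B) with hlam
  have hseg : ∀ x : UProd D O, #{y : UProd D O // y < x} < lam := by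
    refine UProd.ind fun f => ?_
    -- the coordinatewise "initial segment or singleton" types
    set T : ∀ i, Type u :=
      fun i => {y : O i // y < f i ∨ ((¬ ∃ z : O i, z < f i) ∧ y = f i)} with hT
    have hTne : ∀ i, Nonempty (T i) := by
      intro i
      by_cases hz : ∃ z : O i, z < f i
      · exact ⟨⟨hz.choose, Or.inl hz.choose_spec⟩⟩
      · exact ⟨⟨f i, Or.inr ⟨hz, rfl⟩⟩⟩
    have hTcard : ∀ i, #(T i) < baLengthPlus (B i) := by
      intro i
      by_cases hz : ∃ z : O i, z < f i
      · have hinj : Function.Injective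
            (fun y : T i => (⟨y.1, y.2.resolve_right fun hr => hr.1 hz⟩ :
              {y : O i // y < f i})) := by
          intro y y' h
          injection h with h'
          exact Subtype.ext h'
        calc #(T i) ≤ #{y : O i // y < f i} := Cardinal.mk_le_of_injective hinj
          _ < #(O i) := hlo i (f i)
          _ = baLengthPlus (B i) := hmkO i
      · have hsub : Subsingleton (T i) := by
          constructor
          intro y y'
          have hy : y.1 = f i := y.2.resolve_left (fun h => hz ⟨y.1, h⟩) |>.2
          have hy' : y'.1 = f i := y'.2.resolve_left (fun h => hz ⟨y'.1, h⟩) |>.2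
          exact Subtype.ext (hy.trans hy'.symm)
        calc #(T i) ≤ 1 := Cardinal.le_one_iff_subsingleton.mpr hsub
          _ < baLengthPlus (B i) := one_lt_baLengthPlus (B i)
    -- choose chains receiving the T i
    have hch : ∀ i, ∃ X : Set (B i), IsChain (· ≤ ·) X ∧ #(T i) ≤ #X :=
      fun i => exists_chain_of_lt (B i) (hTcard i)
    choose X hXchain hXcard using hch
    have e : ∀ i, T i ↪ ↥(X i) := fun i => Classical.choice ((Cardinal.le_def _ _).mp (hXcard i))
    -- the chain in the ultraproduct
    set Y : Set (UProd D B) :=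
      Set.range (fun c : (∀ i, ↥(X i)) => UProd.mk D (fun i => (c i : B i))) with hY
    have hYchain : IsChain (· ≤ ·) Y := by
      rintro _ ⟨c, rfl⟩ _ ⟨c', rfl⟩ _
      rcases Ultrafilter.mem_or_compl_mem D {i | (c i : B i) ≤ (c' i : B i)} with h | h
      · exact Or.inl h
      · refine Or.inr (Filter.mem_of_superset h fun i hi => ?_)
        exact ((hXchain i).total (c' i).2 (c i).2).resolve_right hi
    have hYlam : Order.succ #(↥Y) ≤ lam :=
      le_ciSup (Cardinal.bddAbove_range _)
        (⟨Y, hYchain⟩ : {X : Set (UProd D B) // IsChain (· ≤ ·) X})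
    -- the coordinatewise map into the T i
    set tmap : (∀ i, O i) → ∀ i, T i := fun g i =>
      if hg : g i < f i then ⟨g i, Or.inl hg⟩ else (hTne i).some with htmap
    have htmap_val : ∀ (g : ∀ i, O i) (i : ι), g i < f i → ((tmap g i).1 : O i) = g i := by
      intro g i hg
      rw [htmap]
      simp only [hg, dif_pos]
    -- points below mk f have D-large strict domination sets
    have hA : ∀ y : UProd D O, y < UProd.mk D f → {i | (Quotient.out y) i < f i} ∈ D := by
      intro y hy
      have hout : UProd.mk D (Quotient.out y) = y := Quotient.out_eq y
      rw [← hout] at hy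
      obtain ⟨hle, hnle⟩ := lt_iff_le_not_ge.mp hy
      have h1 : {i | (Quotient.out y) i ≤ f i} ∈ D := hle
      have h2 : {i | f i ≤ (Quotient.out y) i} ∉ D := hnle
      have h3 : {i | f i ≤ (Quotient.out y) i}ᶜ ∈ D :=
        Ultrafilter.compl_mem_iff_notMem.mpr h2
      exact Filter.mem_of_superset h3 fun i hi => lt_of_not_ge hi
    -- the injection of the initial segment into Y
    have hinj : #{y : UProd D O // y < UProd.mk D f} ≤ #(↥Y) := by
      refine Cardinal.mk_le_of_injective
        (f := fun y : {y : UProd D O // y < UProd.mk D f} =>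
          (⟨UProd.mk D (fun i => ((e i (tmap (Quotient.out y.1) i) : ↥(X i)) : B i)),
            ⟨fun i => e i (tmap (Quotient.out y.1) i), rfl⟩⟩ : ↥Y)) ?_
      intro y y' h
      have h1 : UProd.mk D (fun i => ((e i (tmap (Quotient.out y.1) i) : ↥(X i)) : B i)) =
          UProd.mk D (fun i => ((e i (tmap (Quotient.out y'.1) i) : ↥(X i)) : B i)) :=
        congrArg Subtype.val h
      have h2 : ∀ᶠ i in (D : Filter ι),
          ((e i (tmap (Quotient.out y.1) i) : ↥(X i)) : B i) =
          ((e i (tmap (Quotient.out y'.1) i) : ↥(X i)) : B i) := Quotient.exact h1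
      have h3 : {i | (Quotient.out y.1) i < f i} ∈ D := hA y.1 y.2
      have h4 : {i | (Quotient.out y'.1) i < f i} ∈ D := hA y'.1 y'.2
      have h5 : ∀ᶠ i in (D : Filter ι), (Quotient.out y.1) i = (Quotient.out y'.1) i := by
        have hmem : {i | ((e i (tmap (Quotient.out y.1) i) : ↥(X i)) : B i) =
            ((e i (tmap (Quotient.out y'.1) i) : ↥(X i)) : B i)} ∩
            ({i | (Quotient.out y.1) i < f i} ∩ {i | (Quotient.out y'.1) i < f i}) ∈ D :=
          Filter.inter_mem h2 (Filter.inter_mem h3 h4)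
        refine Filter.mem_of_superset hmem ?_
        rintro i ⟨hei, hgi, hgi'⟩
        have he2 : tmap (Quotient.out y.1) i = tmap (Quotient.out y'.1) i :=
          (e i).injective (Subtype.ext hei)
        have he3 : ((tmap (Quotient.out y.1) i).1 : O i) =
            ((tmap (Quotient.out y'.1) i).1 : O i) := congrArg Subtype.val he2
        rw [htmap_val _ i hgi, htmap_val _ i hgi'] at he3
        exact he3
      have h6 : UProd.mk D (Quotient.out y.1) = UProd.mk D (Quotient.out y'.1) :=
        Quotient.sound h5
      have h7 : y.1 = y'.1 := by
        rw [← Quotient.out_eq y.1, ← Quotient.out_eq y'.1]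
        exact h6
      exact Subtype.ext h7
    calc #{y : UProd D O // y < UProd.mk D f} ≤ #(↥Y) := hinj
      _ < Order.succ #(↥Y) := Order.lt_succ _
      _ ≤ lam := hYlam
  exact card_le_of_iio_lt hseg

end ShSi641
end

section
/- Let κ be an infinite set, D an ultrafilter on κ, and B_i (i ∈ κ) Boolean algebras. If |∏_{i∈κ} Length(B_i)/D| > Length(∏_{i∈κ} B_i/D), then {i ∈ κ : Length⁺(B_i) is a limit cardinal} ∈ D, {i ∈ κ : Length⁺(B_i) is a regular cardinal} ∈ D, and hence {i ∈ κ : Length⁺(B_i) is weakly inaccessible} ∈ D. -/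
open Cardinal Filter

universe u

namespace ShSi641

variable {ι : Type u}

/-! ### Auxiliary pointwise lemmas -/

section PointwiseAux

variable {B : Type u} [BooleanAlgebra B]

instance : Nonempty {X : Set B // IsChain (· ≤ ·) X} := ⟨⟨∅, IsChain.empty⟩⟩

lemma bddAbove_chains :
    BddAbove (Set.range fun X : {X : Set B // IsChain (· ≤ ·) X} => #X.1) :=
  ⟨#B, by rintro c ⟨X, rfl⟩; exact Cardinal.mk_set_le X.1⟩

lemma bddAbove_chains_succ :
    BddAbove (Set.range fun X : {X : Set B // IsChain (· ≤ ·) X} => Order.succ #X.1) :=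
  ⟨Order.succ #B, by rintro c ⟨X, rfl⟩; exact Order.succ_le_succ (Cardinal.mk_set_le X.1)⟩

lemma mk_chain_le {X : Set B} (hX : IsChain (· ≤ ·) X) : #X ≤ baLength B :=
  le_ciSup bddAbove_chains ⟨X, hX⟩

lemma succ_mk_chain_le {X : Set B} (hX : IsChain (· ≤ ·) X) :
    Order.succ #X ≤ baLengthPlus B :=
  le_ciSup bddAbove_chains_succ ⟨X, hX⟩

lemma one_le_baLength : 1 ≤ baLength B := by
  have h : #({⊥} : Set B) ≤ baLength B := mk_chain_le IsChain.singleton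
  simpa using h

lemma baLength_ne_zero : baLength B ≠ 0 :=
  fun h => by simpa [h] using (one_le_baLength (B := B))

lemma baLengthPlus_ne_zero : baLengthPlus B ≠ 0 := by
  intro h
  have h2 := succ_mk_chain_le (X := (∅ : Set B)) IsChain.empty
  rw [h] at h2
  exact (Order.succ_le_iff.mp h2).not_ge (zero_le)

lemma exists_chain_of_not_isSuccLimit (hn : ¬ Order.IsSuccLimit (baLengthPlus B)) :
    ∃ X : Set B, IsChain (· ≤ ·) X ∧ #X = baLength B := by
  have hmin : ¬ IsMin (baLengthPlus B) := by
    intro hm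
    exact baLengthPlus_ne_zero (le_antisymm (hm (zero_le)) (zero_le))
  rw [Order.isSuccLimit_iff] at hn
  push_neg at hn
  obtain ⟨μ, hμ⟩ : ∃ μ, baLengthPlus B = Order.succ μ := by
    have := hn hmin
    rw [Order.IsSuccPrelimit] at this
    push_neg at this
    obtain ⟨b, hb⟩ := this
    exact ⟨b, (hb.succ_eq).symm⟩
  have hle : ∀ X : {X : Set B // IsChain (· ≤ ·) X}, #X.1 ≤ μ := by
    intro X
    have := succ_mk_chain_le X.2
    rw [hμ] at this
    exact Order.succ_le_succ_iff.mp this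
  obtain ⟨X₀, hX₀⟩ : ∃ X : {X : Set B // IsChain (· ≤ ·) X}, #X.1 = μ := by
    by_contra hno
    push_neg at hno
    have : baLengthPlus B ≤ μ := by
      refine ciSup_le fun X => ?_
      exact Order.succ_le_of_lt (lt_of_le_of_ne (hle X) (hno X))
    rw [hμ] at this
    exact (Order.lt_succ μ).not_ge this
  have hlen : baLength B = μ := by
    refine le_antisymm (ciSup_le hle) ?_
    rw [← hX₀]; exact mk_chain_le X₀.2
  exact ⟨X₀.1, X₀.2, by rw [hX₀, hlen]⟩

lemma baLength_eq_baLengthPlus_of_isSuccLimit (hl : Order.IsSuccLimit (baLengthPlus B)) :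
    baLength B = baLengthPlus B := by
  refine le_antisymm (ciSup_le fun X => le_trans (Order.le_succ _) (succ_mk_chain_le X.2)) ?_
  by_contra hlt
  push_neg at hlt
  have h2 : Order.succ (baLength B) < baLengthPlus B := hl.succ_lt hlt
  obtain ⟨X, hX⟩ := exists_lt_of_lt_ciSup h2
  have : baLength B < #X.1 := Order.succ_lt_succ_iff.mp hX
  exact this.not_ge (mk_chain_le X.2)

lemma exists_emb_of_lt_baLength {c : Cardinal.{u}} (hc : c < baLength B) :
    ∃ e : c.out → B, Function.Injective e ∧ ∀ x y, e x ≤ e y ∨ e y ≤ e x := by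
  obtain ⟨X, hX⟩ := exists_lt_of_lt_ciSup hc
  have hle : #(c.out) ≤ #X.1 := by rw [Cardinal.mk_out]; exact hX.le
  obtain ⟨f⟩ := Cardinal.le_def _ _ |>.mp hle
  refine ⟨fun x => (f x).1, fun x y hxy => f.injective (Subtype.ext hxy), fun x y => ?_⟩
  rcases eq_or_ne (f x : B) (f y : B) with hxy | hxy
  · exact Or.inl hxy.le
  · exact X.2 (f x).2 (f y).2 hxy

lemma icc_shrink {u v : B} (huv : u ≤ v) (hinf : (Set.Icc u v).Infinite) :
    ∃ p : B × B, p.1 ∈ Set.Icc u v ∧ p.2 ∈ Set.Icc u v ∧ p.1 ≤ p.2 ∧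
      (Set.Icc p.1 p.2).Infinite ∧ p ≠ (u, v) := by
  obtain ⟨w, hw⟩ := (hinf.diff ((Set.finite_singleton u).insert v)).nonempty
  obtain ⟨hw1, hw2⟩ := hw
  have hwu : w ≠ u := fun h => hw2 (by simp [h])
  have hwv : w ≠ v := fun h => hw2 (by simp [h])
  obtain ⟨hut, htv⟩ := hw1
  by_cases hic : (Set.Icc u w).Infinite
  · exact ⟨(u, w), ⟨le_rfl, huv⟩, ⟨hut, htv⟩, hut, hic, fun h => hwv (congrArg Prod.snd h)⟩
  · have hic2 : (Set.Icc w v).Infinite := by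
      rw [Set.not_infinite] at hic
      intro hfin
      have hinj : Set.InjOn (fun x : B => ((x ⊓ w, x ⊔ w) : B × B)) (Set.Icc u v) := by
        intro x _ y _ hxy
        exact eq_of_inf_eq_sup_eq (congrArg Prod.fst hxy) (congrArg Prod.snd hxy)
      have himg : (fun x : B => ((x ⊓ w, x ⊔ w) : B × B)) '' (Set.Icc u v) ⊆
          (Set.Icc u w) ×ˢ (Set.Icc w v) := by
        rintro _ ⟨x, ⟨hux, hxv⟩, rfl⟩
        exact ⟨⟨le_inf hux hut, inf_le_right⟩, ⟨le_sup_right, sup_le hxv htv⟩⟩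
      exact ((hinf.image hinj).mono himg) (hic.prod hfin)
    exact ⟨(w, v), ⟨hut, htv⟩, ⟨huv, le_rfl⟩, htv, hic2, fun h => hwu (congrArg Prod.fst h)⟩

lemma exists_infinite_chain [Infinite B] : ∃ X : Set B, IsChain (· ≤ ·) X ∧ ℵ₀ ≤ #X := by
  have hstep : ∀ t : {p : B × B // p.1 ≤ p.2 ∧ (Set.Icc p.1 p.2).Infinite},
      ∃ t' : {p : B × B // p.1 ≤ p.2 ∧ (Set.Icc p.1 p.2).Infinite},
        t.1.1 ≤ t'.1.1 ∧ t'.1.2 ≤ t.1.2 ∧ t'.1 ≠ t.1 := by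
    intro t
    obtain ⟨p, hp1, hp2, hp3, hp4, hp5⟩ := icc_shrink t.2.1 t.2.2
    exact ⟨⟨p, hp3, hp4⟩, hp1.1, hp2.2, hp5⟩
  choose f hf1 hf2 hf3 using hstep
  have hicc : (Set.Icc (⊥ : B) ⊤).Infinite := by
    rw [Set.Icc_bot, Set.Iic_top]
    exact Set.infinite_univ
  let sq : ℕ → {p : B × B // p.1 ≤ p.2 ∧ (Set.Icc p.1 p.2).Infinite} :=
    fun n => f^[n] ⟨(⊥, ⊤), bot_le, hicc⟩
  have hsq : ∀ n, sq (n + 1) = f (sq n) := fun n => Function.iterate_succ_apply' f n _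
  set u' : ℕ → B := fun n => (sq n).1.1 with hu
  set v' : ℕ → B := fun n => (sq n).1.2 with hv
  have hm1 : Monotone u' :=
    monotone_nat_of_le_succ (fun n => by rw [hu]; simp only; rw [hsq n]; exact hf1 (sq n))
  have hm2 : Antitone v' :=
    antitone_nat_of_succ_le (fun n => by rw [hv]; simp only; rw [hsq n]; exact hf2 (sq n))
  have hlt : ∀ n, u' n ≤ v' n := fun n => (sq n).2.1
  have hne : ∀ n, (sq (n + 1)).1 ≠ (sq n).1 := fun n => by rw [hsq n]; exact hf3 (sq n)
  have key : ∀ m n, m < n → (sq m).1 ≠ (sq n).1 := by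
    intro m n hmn heq
    apply hne m
    have h1 : u' m ≤ u' (m + 1) := hm1 (Nat.le_succ m)
    have h2 : u' (m + 1) ≤ u' n := hm1 hmn
    have h3 : v' (m + 1) ≤ v' m := hm2 (Nat.le_succ m)
    have h4 : v' n ≤ v' (m + 1) := hm2 hmn
    have hu' : u' m = u' n := congrArg Prod.fst heq
    have hv' : v' m = v' n := congrArg Prod.snd heq
    have e1 : u' (m + 1) = u' m := le_antisymm (hu' ▸ h2) h1
    have e2 : v' (m + 1) = v' m := le_antisymm h3 (hv' ▸ h4)
    have hpair : (sq (m + 1)).1 = (u' (m + 1), v' (m + 1)) := rfl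
    rw [hpair, e1, e2]
  have pinj : Function.Injective (fun n => (sq n).1) := by
    intro m n hmn
    rcases lt_trichotomy m n with h | h | h
    · exact absurd hmn (key m n h)
    · exact h
    · exact absurd hmn.symm (key n m h)
  refine ⟨Set.range u' ∪ Set.range v', ?_, ?_⟩
  · rintro a (⟨m, rfl⟩ | ⟨m, rfl⟩) b (⟨n, rfl⟩ | ⟨n, rfl⟩) _
    · rcases le_total m n with h | h
      · exact Or.inl (hm1 h)
      · exact Or.inr (hm1 h)
    · rcases le_total m n with h | h
      · exact Or.inl ((hm1 h).trans (hlt n))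
      · exact Or.inl ((hlt m).trans (hm2 h))
    · rcases le_total n m with h | h
      · exact Or.inr ((hm1 h).trans (hlt m))
      · exact Or.inr ((hlt n).trans (hm2 h))
    · rcases le_total m n with h | h
      · exact Or.inr (hm2 h)
      · exact Or.inl (hm2 h)
  · have hinfr : (Set.range fun n => (sq n).1).Infinite := Set.infinite_range_of_injective pinj
    have hsub : (Set.range fun n => (sq n).1) ⊆
        (Set.range u' ∪ Set.range v') ×ˢ (Set.range u' ∪ Set.range v') := by
      rintro _ ⟨n, rfl⟩
      exact ⟨Or.inl ⟨n, rfl⟩, Or.inr ⟨n, rfl⟩⟩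
    have hXinf : (Set.range u' ∪ Set.range v').Infinite := by
      intro hfin
      exact hinfr.mono hsub (hfin.prod hfin)
    rw [Cardinal.aleph0_le_mk_iff, Set.infinite_coe_iff]
    exact hXinf

lemma aleph0_lt_baLengthPlus (hl : Order.IsSuccLimit (baLengthPlus B)) :
    ℵ₀ < baLengthPlus B := by
  have hinf : Infinite B := by
    rw [Cardinal.infinite_iff, Cardinal.aleph0_le]
    intro n
    have hn : (n : Cardinal.{u}) < baLengthPlus B :=
      lt_of_lt_of_le (Cardinal.nat_lt_aleph0 n) (Cardinal.aleph0_le_of_isSuccLimit hl)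
    obtain ⟨X, hX⟩ := exists_lt_of_lt_ciSup hn
    have : (n : Cardinal.{u}) ≤ #X.1 := Order.lt_succ_iff.mp hX
    exact this.trans (Cardinal.mk_set_le X.1)
  obtain ⟨X, hX, hX0⟩ := exists_infinite_chain (B := B)
  calc ℵ₀ < Order.succ ℵ₀ := Order.lt_succ _
    _ ≤ Order.succ #X := Order.succ_le_succ hX0
    _ ≤ baLengthPlus B := succ_mk_chain_le hX

lemma sing_core (h0 : ℵ₀ < baLength B) :
    ∃ (φ : (baLength B).out → ((baLength B).ord.cof).out) (ψ : (baLength B).out → B),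
      (∀ x y, φ x = φ y → ψ x = ψ y → x = y) ∧
      (∀ x y, φ x = φ y → (ψ x ≤ ψ y ∨ ψ y ≤ ψ x)) := by
  set lam := baLength B with hlam
  obtain ⟨S, hSunb, hScard⟩ := Order.exists_cof_eq lam.ord.ToType
  rw [← Ordinal.cof_type, Ordinal.type_toType] at hScard
  have hcard : #(lam.out) = #(lam.ord.ToType) := by
    rw [Cardinal.mk_out, Cardinal.mk_toType, Cardinal.card_ord]
  obtain ⟨e1⟩ := Cardinal.eq.mp hcard
  have sel : ∀ w : lam.ord.ToType, ∃ s : lam.ord.ToType, s ∈ S ∧ w ≤ s := by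
    intro w
    obtain ⟨s, hs1, hs2⟩ := hSunb w
    exact ⟨s, hs1, hs2⟩
  choose sf hsf1 hsf2 using sel
  have hIic : ∀ b : lam.ord.ToType, #(Set.Iic b) < lam := by
    intro b
    have h1 : (Set.Iic b) ⊆ insert b (Set.Iio b) := by
      intro x hx
      rcases eq_or_lt_of_le (Set.mem_Iic.mp hx) with h | h
      · exact Set.mem_insert_iff.mpr (Or.inl h)
      · exact Set.mem_insert_iff.mpr (Or.inr h)
    calc #(Set.Iic b) ≤ #(insert b (Set.Iio b) : Set _) := Cardinal.mk_le_mk_of_subset h1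
      _ ≤ #(Set.Iio b) + 1 := Cardinal.mk_insert_le
      _ < lam := Cardinal.add_lt_of_lt h0.le (Cardinal.mk_Iio_ord_toType b)
          (lt_trans Cardinal.one_lt_aleph0 h0)
  have hchain : ∀ b : lam.ord.ToType, ∃ e : lam.ord.ToType → B,
      (∀ w w', w ≤ b → w' ≤ b → e w = e w' → w = w') ∧
      (∀ w w', e w ≤ e w' ∨ e w' ≤ e w) := by
    intro b
    obtain ⟨e, he1, he2⟩ := exists_emb_of_lt_baLength (hIic b)
    have hmk : #(Set.Iic b) = #((#(Set.Iic b)).out) := (Cardinal.mk_out _).symm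
    obtain ⟨e0⟩ := Cardinal.eq.mp hmk
    refine ⟨fun w => if h : w ≤ b then e (e0 ⟨w, h⟩)
      else e (e0 ⟨b, Set.mem_Iic.mpr le_rfl⟩), ?_, ?_⟩
    · intro w w' hw hw' hee
      beta_reduce at hee
      rw [dif_pos hw, dif_pos hw'] at hee
      have := e0.injective (he1 hee)
      exact congrArg Subtype.val this
    · intro w w'
      have hz : ∀ w'' : lam.ord.ToType, ∃ z, (if h : w'' ≤ b then e (e0 ⟨w'', h⟩)
          else e (e0 ⟨b, Set.mem_Iic.mpr le_rfl⟩)) = e z := by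
        intro w''
        by_cases h : w'' ≤ b
        · exact ⟨_, dif_pos h⟩
        · exact ⟨_, dif_neg h⟩
      obtain ⟨z, hzz⟩ := hz w
      obtain ⟨z', hzz'⟩ := hz w'
      beta_reduce
      rw [hzz, hzz']
      apply he2
  choose ce hce1 hce2 using hchain
  have hScard2 : #S = #((lam.ord.cof).out) := by rw [hScard, Cardinal.mk_out]
  obtain ⟨e2⟩ := Cardinal.eq.mp hScard2
  refine ⟨fun x => e2 ⟨sf (e1 x), hsf1 _⟩,
    fun x => ce (sf (e1 x)) (e1 x), ?_, ?_⟩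
  · intro x y h1 h2
    beta_reduce at h1 h2
    have hb : sf (e1 x) = sf (e1 y) :=
      congrArg Subtype.val (e2.injective h1)
    rw [hb] at h2
    have hbx : e1 x ≤ sf (e1 y) := hb ▸ hsf2 (e1 x)
    have := hce1 (sf (e1 y)) (e1 x) (e1 y) hbx (hsf2 (e1 y)) h2
    exact e1.injective this
  · intro x y h1
    beta_reduce at h1 ⊢
    have hb : sf (e1 x) = sf (e1 y) :=
      congrArg Subtype.val (e2.injective h1)
    rw [hb]
    exact hce2 (sf (e1 y)) _ _

end PointwiseAux

/-! ### Ultraproduct lemmas -/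

section UProdAux

variable {ι : Type u} {D : Ultrafilter ι} {B : ι → Type u} [∀ i, BooleanAlgebra (B i)]

lemma UProd.mk_le_mk {f g : ∀ i, B i} :
    UProd.mk D f ≤ UProd.mk D g ↔ ∀ᶠ i in (D : Filter ι), f i ≤ g i :=
  Iff.rfl

lemma mk_le_uprod_const (A : Type u) (D : Ultrafilter ι) :
    #A ≤ #(UProd D fun _ => A) := by
  refine Cardinal.mk_le_of_injective (f := fun a => UProd.mk D (fun _ => a)) ?_
  intro a b hab
  have h : ∀ᶠ _i in (D : Filter ι), a = b := Quotient.exact hab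
  obtain ⟨_, hi⟩ := h.exists
  exact hi

lemma uprod_chain_le {S : Set ι} (hS : S ∈ D) (C : ι → Type u) (e : ∀ i, C i → B i)
    (hinj : ∀ i ∈ S, Function.Injective (e i))
    (hcomp : ∀ i ∈ S, ∀ x y, e i x ≤ e i y ∨ e i y ≤ e i x) :
    #(UProd D C) ≤ baLength (UProd D B) := by
  have hSev : ∀ᶠ i in (D : Filter ι), i ∈ S := Ultrafilter.mem_coe.mpr hS
  let m : UProd D C → UProd D B := Quotient.map (fun f i => e i (f i))
      (fun f g hfg => hfg.mono fun i hi => by dsimp only; rw [hi])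
  have hm : Function.Injective m := by
    intro x y
    refine Quotient.inductionOn₂ x y fun f g hq => Quotient.sound ?_
    have h1 : ∀ᶠ i in (D : Filter ι), e i (f i) = e i (g i) := Quotient.exact hq
    exact (h1.and hSev).mono fun i hi => hinj i hi.2 hi.1
  have hchain : IsChain (· ≤ ·) (Set.range m) := by
    rintro a ⟨x, rfl⟩ b ⟨y, rfl⟩ hab
    revert hab
    refine Quotient.inductionOn₂ x y fun f g => ?_
    intro _
    have hun : {i | e i (f i) ≤ e i (g i)} ∪ {i | e i (g i) ≤ e i (f i)} ∈ D := by
      refine Ultrafilter.mem_coe.mp (Filter.mem_of_superset hSev ?_)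
      intro i hi
      exact (hcomp i hi (f i) (g i)).imp id id
    rcases Ultrafilter.union_mem_iff.mp hun with hle | hle
    · exact Or.inl (Ultrafilter.mem_coe.mpr hle)
    · exact Or.inr (Ultrafilter.mem_coe.mpr hle)
  calc #(UProd D C) = #(Set.range m) := (Cardinal.mk_range_eq m hm).symm
    _ ≤ baLength (UProd D B) := mk_chain_le hchain

end UProdAux

/-- if `|∏ Length(B_i)/D| > Length(∏ B_i/D)` then `D`-almost all
`Length⁺(B_i)` are limit cardinals, regular cardinals, and hence weakly inaccessible. -/
theorem statement_2 {ι : Type u} [Infinite ι] (D : Ultrafilter ι)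
    (B : ι → Type u) [∀ i, BooleanAlgebra (B i)]
    (h : baLength (UProd D B) < #(UProd D fun i => (baLength (B i)).out)) :
    {i | Order.IsSuccLimit (baLengthPlus (B i))} ∈ D ∧
    {i | (baLengthPlus (B i)).IsRegular} ∈ D ∧
    {i | IsWeaklyInaccessible (baLengthPlus (B i))} ∈ D := by
  classical
  -- Part 1: the set of `i` where `Length⁺(B i)` is a successor is not in `D`.
  have hsucc : {i | ¬ Order.IsSuccLimit (baLengthPlus (B i))} ∉ D := by
    intro hmem
    have hx : ∀ i, ∃ e : (baLength (B i)).out → B i,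
        i ∈ {i | ¬ Order.IsSuccLimit (baLengthPlus (B i))} →
          Function.Injective e ∧ ∀ x y, e x ≤ e y ∨ e y ≤ e x := by
      intro i
      by_cases hi : Order.IsSuccLimit (baLengthPlus (B i))
      · exact ⟨fun _ => ⊥, fun hmem' => absurd hi hmem'⟩
      · obtain ⟨X, hXc, hXe⟩ := exists_chain_of_not_isSuccLimit hi
        have hco : #((baLength (B i)).out) = #X := by rw [Cardinal.mk_out, hXe]
        obtain ⟨e0⟩ := Cardinal.eq.mp hco
        refine ⟨fun x => (e0 x).1, fun _ =>
          ⟨fun x y hxy => e0.injective (Subtype.ext hxy), fun x y => ?_⟩⟩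
        rcases eq_or_ne ((e0 x) : B i) ((e0 y) : B i) with hxy | hxy
        · exact Or.inl hxy.le
        · exact hXc (e0 x).2 (e0 y).2 hxy
    choose e he using hx
    have hle := uprod_chain_le (D := D) (B := B) hmem (fun i => (baLength (B i)).out) e
      (fun i hi => (he i hi).1) (fun i hi => (he i hi).2)
    exact absurd hle (not_le.mpr h)
  have h1 : {i | Order.IsSuccLimit (baLengthPlus (B i))} ∈ D := by
    have hc := Ultrafilter.compl_mem_iff_notMem.mpr hsucc
    refine Ultrafilter.mem_coe.mp (Filter.mem_of_superset (Ultrafilter.mem_coe.mpr hc) ?_)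
    intro i hi
    simp only [Set.mem_compl_iff, Set.mem_setOf_eq, not_not] at hi
    exact hi
  -- Part 2: the set of `i` where `Length⁺(B i)` is a singular limit is not in `D`.
  have hsing : {i | Order.IsSuccLimit (baLengthPlus (B i)) ∧
      ¬ (baLengthPlus (B i)).IsRegular} ∉ D := by
    intro hmem
    set Sg := {i | Order.IsSuccLimit (baLengthPlus (B i)) ∧
      ¬ (baLengthPlus (B i)).IsRegular} with hSgdef
    have hal : ∀ i ∈ Sg, ℵ₀ < baLength (B i) := by
      intro i hi
      rw [baLength_eq_baLengthPlus_of_isSuccLimit hi.1]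
      exact aleph0_lt_baLengthPlus hi.1
    have hx : ∀ i, ∃ (φ : (baLength (B i)).out → ((baLength (B i)).ord.cof).out)
        (ψ : (baLength (B i)).out → B i), i ∈ Sg →
        ((∀ x y, φ x = φ y → ψ x = ψ y → x = y) ∧
         (∀ x y, φ x = φ y → ψ x ≤ ψ y ∨ ψ y ≤ ψ x)) := by
      intro i
      by_cases hi : i ∈ Sg
      · obtain ⟨φ, ψ, hj1, hj2⟩ := sing_core (hal i hi)
        exact ⟨φ, ψ, fun _ => ⟨hj1, hj2⟩⟩
      · have hne : Nonempty (((baLength (B i)).ord.cof).out) := by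
          rw [← Cardinal.mk_ne_zero_iff, Cardinal.mk_out, Ne, Ordinal.cof_eq_zero,
            Cardinal.ord_eq_zero]
          exact baLength_ne_zero
        exact ⟨fun _ => hne.some, fun _ => ⊥, fun hmem' => absurd hmem' hi⟩
    choose φ ψ hφψ using hx
    set L := baLength (UProd D B) with hLdef
    have hSev : ∀ᶠ i in (D : Filter ι), i ∈ Sg := Ultrafilter.mem_coe.mpr hmem
    let Φ : UProd D (fun i => (baLength (B i)).out) →
        UProd D (fun i => ((baLength (B i)).ord.cof).out) :=
      Quotient.map (fun f i => φ i (f i))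
        (fun f g hfg => hfg.mono fun i hi => by dsimp only; rw [hi])
    let Ψ : UProd D (fun i => (baLength (B i)).out) → UProd D B :=
      Quotient.map (fun f i => ψ i (f i))
        (fun f g hfg => hfg.mono fun i hi => by dsimp only; rw [hi])
    have hfib : ∀ t, #{x // Φ x = t} ≤ L := by
      intro t
      have hinj : Function.Injective (fun x : {x // Φ x = t} => Ψ x.1) := by
        intro x y hxy
        have hph : Φ x.1 = Φ y.1 := x.2.trans y.2.symm
        have hxy' : Ψ x.1 = Ψ y.1 := hxy
        refine Subtype.ext ?_
        revert hph hxy'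
        refine Quotient.inductionOn₂ x.1 y.1 fun f g => ?_
        intro hph hxy'
        refine Quotient.sound ?_
        have ha : ∀ᶠ i in (D : Filter ι), φ i (f i) = φ i (g i) := Quotient.exact hph
        have hb : ∀ᶠ i in (D : Filter ι), ψ i (f i) = ψ i (g i) := Quotient.exact hxy'
        exact ((ha.and hb).and hSev).mono fun i hi => (hφψ i hi.2).1 _ _ hi.1.1 hi.1.2
      have himg : IsChain (· ≤ ·) (Set.range (fun x : {x // Φ x = t} => Ψ x.1)) := by
        rintro a ⟨x, rfl⟩ b ⟨y, rfl⟩ _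
        show Ψ x.1 ≤ Ψ y.1 ∨ Ψ y.1 ≤ Ψ x.1
        have hph : Φ x.1 = Φ y.1 := x.2.trans y.2.symm
        revert hph
        refine Quotient.inductionOn₂ x.1 y.1 fun f g => ?_
        intro hph
        have ha : ∀ᶠ i in (D : Filter ι), φ i (f i) = φ i (g i) := Quotient.exact hph
        have hun : {i | ψ i (f i) ≤ ψ i (g i)} ∪ {i | ψ i (g i) ≤ ψ i (f i)} ∈ D := by
          refine Ultrafilter.mem_coe.mp (Filter.mem_of_superset (ha.and hSev) ?_)
          intro i hi
          exact ((hφψ i hi.2).2 (f i) (g i) hi.1).imp id id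
        rcases Ultrafilter.union_mem_iff.mp hun with hle | hle
        · exact Or.inl (Ultrafilter.mem_coe.mpr hle)
        · exact Or.inr (Ultrafilter.mem_coe.mpr hle)
      calc #{x // Φ x = t}
          = #(Set.range (fun x : {x // Φ x = t} => Ψ x.1)) :=
            (Cardinal.mk_range_eq _ hinj).symm
        _ ≤ L := mk_chain_le himg
    have hsum : #(UProd D (fun i => (baLength (B i)).out)) ≤
        #(UProd D (fun i => ((baLength (B i)).ord.cof).out)) * L := by
      calc #(UProd D (fun i => (baLength (B i)).out))
          = #(Σ t, {x // Φ x = t}) := Cardinal.mk_congr (Equiv.sigmaFiberEquiv Φ).symm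
        _ = Cardinal.sum (fun t => #{x // Φ x = t}) := Cardinal.mk_sigma _
        _ ≤ Cardinal.sum (fun _ => L) := Cardinal.sum_le_sum _ _ hfib
        _ = _ * L := Cardinal.sum_const' _ _
    have hth : #(UProd D (fun i => ((baLength (B i)).ord.cof).out)) ≤ L := by
      have hx2 : ∀ i, ∃ e : ((baLength (B i)).ord.cof).out → B i, i ∈ Sg →
          Function.Injective e ∧ ∀ x y, e x ≤ e y ∨ e y ≤ e x := by
        intro i
        by_cases hi : i ∈ Sg
        · have hcof : ((baLength (B i)).ord.cof) < baLength (B i) := by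
            have heq := baLength_eq_baLengthPlus_of_isSuccLimit hi.1
            rw [heq]
            exact lt_of_not_ge fun hge =>
              hi.2 ⟨Cardinal.aleph0_le_of_isSuccLimit hi.1, hge⟩
          obtain ⟨e', he'⟩ := exists_emb_of_lt_baLength hcof
          exact ⟨e', fun _ => he'⟩
        · exact ⟨fun _ => ⊥, fun hmem' => absurd hmem' hi⟩
      choose e2 he2 using hx2
      exact uprod_chain_le hmem _ e2 (fun i hi => (he2 i hi).1) (fun i hi => (he2 i hi).2)
    have hL0 : ℵ₀ ≤ L := by
      have hx3 : ∀ i, ∃ e : (ℵ₀ : Cardinal.{u}).out → B i, i ∈ Sg →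
          Function.Injective e ∧ ∀ x y, e x ≤ e y ∨ e y ≤ e x := by
        intro i
        by_cases hi : i ∈ Sg
        · obtain ⟨e', he'⟩ := exists_emb_of_lt_baLength (hal i hi)
          exact ⟨e', fun _ => he'⟩
        · exact ⟨fun _ => ⊥, fun hmem' => absurd hmem' hi⟩
      choose e3 he3 using hx3
      have hchl := uprod_chain_le hmem _ e3
        (fun i hi => (he3 i hi).1) (fun i hi => (he3 i hi).2)
      refine le_trans ?_ hchl
      refine le_trans ?_ (mk_le_uprod_const _ D)
      rw [Cardinal.mk_out]
    have hfinal : #(UProd D (fun i => (baLength (B i)).out)) ≤ L := by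
      refine hsum.trans ?_
      calc #(UProd D (fun i => ((baLength (B i)).ord.cof).out)) * L
          ≤ L * L := mul_le_mul_left hth L
        _ = L := Cardinal.mul_eq_self hL0
    exact absurd hfinal (not_le.mpr h)
  have h2 : {i | (baLengthPlus (B i)).IsRegular} ∈ D := by
    have hc := Ultrafilter.compl_mem_iff_notMem.mpr hsing
    refine Ultrafilter.mem_coe.mp (Filter.mem_of_superset
      (Filter.inter_mem (Ultrafilter.mem_coe.mpr h1) (Ultrafilter.mem_coe.mpr hc)) ?_)
    rintro i ⟨hi1, hi2⟩
    simp only [Set.mem_compl_iff, Set.mem_setOf_eq, not_and, not_not] at hi2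
    exact hi2 hi1
  refine ⟨h1, h2, ?_⟩
  refine Ultrafilter.mem_coe.mp (Filter.mem_of_superset
    (Filter.inter_mem (Ultrafilter.mem_coe.mpr h1) (Ultrafilter.mem_coe.mpr h2)) ?_)
  rintro i ⟨hi1, hi2⟩
  exact ⟨aleph0_lt_baLengthPlus hi1, hi2, hi1⟩

end ShSi641
end

section
/- Let κ be an infinite set, D an ultrafilter on κ, and B_i (i ∈ κ) Boolean algebras. If |∏_{i∈κ} Length(B_i)/D| > Length(∏_{i∈κ} B_i/D), then the linear order ∏_{i∈κ} Length⁺(B_i)/D (the ultraproduct of the ordinals Length⁺(B_i) with their ordinal order) is λ-like for some successor cardinal λ. -/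
open Cardinal Filter

universe u

namespace ShSi641

variable {ι : Type u}

lemma mk_le_succ_of_seg {α : Type u} [LinearOrder α] {κ : Cardinal.{u}}
    (h : ∀ x : α, #(Set.Iio x) ≤ κ) : #α ≤ Order.succ κ := by
  classical
  rcases isEmpty_or_nonempty α with hα | hα
  · simp [Cardinal.mk_eq_zero]
  rcases lt_or_ge κ ℵ₀ with hκ | hκ
  · -- finite case
    obtain ⟨n, rfl⟩ := Cardinal.lt_aleph0.1 hκ
    refine le_trans ?_ (Cardinal.add_one_le_succ _)
    by_contra h'
    push_neg at h'
    have h2 : ((n + 2 : ℕ) : Cardinal) ≤ #α := by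
      have := Order.succ_le_of_lt h'
      rwa [show ((n : Cardinal) + 1) = ((n+1 : ℕ) : Cardinal) by push_cast; ring,
        Cardinal.succ_natCast, show ((n+1 : ℕ) : Cardinal) + 1 = ((n+2:ℕ) : Cardinal) by
          push_cast; ring] at this
    have h2' : #(ULift.{u} (Fin (n+2))) ≤ #α := by simpa using h2
    rw [Cardinal.le_def] at h2'
    obtain ⟨e⟩ := h2'
    set s : Finset α := Finset.univ.map e with hs
    have hsne : s.Nonempty := by
      rw [← Finset.card_pos, hs, Finset.card_map, Finset.card_univ]
      simp
    set m := s.max' hsne with hm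
    have hsub : ((s.erase m : Finset α) : Set α) ⊆ Set.Iio m := by
      intro x hx
      rw [Finset.coe_erase] at hx
      exact lt_of_le_of_ne (s.le_max' x hx.1) (by simpa using hx.2)
    have hcard : ((n + 1 : ℕ) : Cardinal) ≤ (n : Cardinal) := by
      have hce : (s.erase m).card = n + 1 := by
        rw [Finset.card_erase_of_mem (s.max'_mem hsne), hs, Finset.card_map,
          Finset.card_univ]
        simp
      calc ((n+1:ℕ) : Cardinal) = #((s.erase m : Finset α) : Set α) := by
            simp only [Finset.coe_sort_coe, Cardinal.mk_coe_finset, hce]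
      _ ≤ #(Set.Iio m) := Cardinal.mk_le_mk_of_subset hsub
      _ ≤ (n : Cardinal) := h m
    rw [Nat.cast_le] at hcard
    omega
  · -- infinite case
    set C : Set α := {x | ∀ y, WellOrderingRel y x → y < x} with hC
    have hwf : WellFounded (WellOrderingRel : α → α → Prop) := IsWellFounded.wf
    have hcof : ∀ a : α, ∃ c ∈ C, a ≤ c := by
      intro a
      have hne : {z : α | a ≤ z}.Nonempty := ⟨a, le_rfl⟩
      refine ⟨hwf.min _ hne, ?_, hwf.min_mem _ hne⟩
      intro y hy
      have hyS : y ∉ {z : α | a ≤ z} := fun hmem => hwf.not_lt_min _ hmem hy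
      exact lt_of_lt_of_le (lt_of_not_ge hyS) (hwf.min_mem _ hne)
    haveI : Nonempty ↥C := by
      obtain ⟨c, hc, _⟩ := hcof (Classical.arbitrary α); exact ⟨⟨c, hc⟩⟩
    haveI : IsTrichotomous ↥C (fun a b : ↥C => (a : α) < b) := by
      constructor
      intro a b h1 h2
      rcases lt_trichotomy (a : α) (b : α) with hh | hh | hh
      · exact absurd hh h1
      · exact Subtype.ext hh
      · exact absurd hh h2
    haveI : IsTrans ↥C (fun a b : ↥C => (a : α) < b) := ⟨fun _ _ _ => lt_trans⟩
    haveI : IsWellFounded ↥C (fun a b : ↥C => (a : α) < b) := by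
      have hsub : Subrelation (fun a b : ↥C => (a : α) < b)
          (fun a b : ↥C => WellOrderingRel a.1 b.1) := by
        intro a b hab
        rcases trichotomous_of WellOrderingRel a.1 b.1 with hh | hh | hh
        · exact hh
        · exact absurd (hh ▸ hab) (lt_irrefl _)
        · exact absurd (a.2 _ hh) (asymm hab)
      exact ⟨hsub.wf (InvImage.wf Subtype.val hwf)⟩
    haveI hwo : IsWellOrder ↥C (fun a b : ↥C => (a : α) < b) := { }
    have hCcard : #↥C ≤ Order.succ κ := by
      by_contra hlt
      push_neg at hlt
      have h1 : (Order.succ κ).ord < Ordinal.type (fun a b : ↥C => (a : α) < b) := by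
        rw [← not_le]
        intro hle
        have h2 := Ordinal.card_le_card hle
        rw [Ordinal.card_type, Cardinal.card_ord] at h2
        exact absurd h2 (not_le.mpr hlt)
      obtain ⟨c, hc⟩ := Ordinal.typein_surj _ h1
      have h2 : #{y : ↥C // (y : α) < (c : α)} = Order.succ κ := by
        have h4 := Ordinal.card_typein (r := fun a b : ↥C => (a : α) < b) c
        rw [show (Ordinal.typein (fun a b : ↥C => (a : α) < b)) c = (Order.succ κ).ord
          from hc, Cardinal.card_ord] at h4
        exact h4.symm
      have h3 : #{y : ↥C // (y : α) < (c : α)} ≤ #(Set.Iio (c : α)) :=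
        Cardinal.mk_le_of_injective
          (f := fun y => (⟨y.1.1, y.2⟩ : Set.Iio (c : α)))
          (fun y y' hyy => by
            simp only [Subtype.mk.injEq] at hyy
            apply Subtype.ext; apply Subtype.ext; exact congrArg (fun z : Set.Iio (c : α) => (z : α)) hyy)
      rw [h2] at h3
      exact absurd (h3.trans (h (c : α))) (not_le.mpr (Order.lt_succ κ))
    have huniv : (Set.univ : Set α) ⊆ ⋃ c : ↥C, Set.Iic (c : α) := by
      intro a _
      obtain ⟨c, hc, hac⟩ := hcof a
      exact Set.mem_iUnion.mpr ⟨⟨c, hc⟩, hac⟩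
    have hIic : ∀ c : ↥C, #(Set.Iic (c : α)) ≤ κ + 1 := by
      intro c
      have hsub : Set.Iic (c : α) ⊆ insert (c : α) (Set.Iio (c : α)) := by
        intro x hx
        rcases eq_or_lt_of_le (hx : x ≤ (c : α)) with h' | h'
        · exact Set.mem_insert_iff.mpr (Or.inl h')
        · exact Set.mem_insert_iff.mpr (Or.inr h')
      exact (Cardinal.mk_le_mk_of_subset hsub).trans
        (Cardinal.mk_insert_le.trans (add_le_add_left (h _) 1))
    calc #α = #(Set.univ : Set α) := Cardinal.mk_univ.symm
      _ ≤ #(⋃ c : ↥C, Set.Iic (c : α)) := Cardinal.mk_le_mk_of_subset huniv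
      _ ≤ #↥C * ⨆ c : ↥C, #(Set.Iic (c : α)) := Cardinal.mk_iUnion_le _
      _ ≤ Order.succ κ * (κ + 1) := mul_le_mul' hCcard (ciSup_le hIic)
      _ ≤ Order.succ κ * Order.succ κ := mul_le_mul' le_rfl (Cardinal.add_one_le_succ κ)
      _ = Order.succ κ := Cardinal.mul_eq_self (hκ.trans (Order.le_succ κ))

lemma mk_le_succ_of_rel {α : Type u} (r : α → α → Prop) [IsTrichotomous α r] [IsTrans α r]
    [IsIrrefl α r] {κ : Cardinal.{u}} (h : ∀ x : α, #{y : α // r y x} ≤ κ) :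
    #α ≤ Order.succ κ := by
  classical
  haveI : IsStrictTotalOrder α r := { }
  haveI : DecidableRel r := Classical.decRel r
  letI : LinearOrder α := linearOrderOfSTO r
  exact mk_le_succ_of_seg (fun x => h x)

lemma UProd.mk_mono {D : Ultrafilter ι} {A A' : ι → Type u} (j : ∀ i, A i ↪ A' i) :
    #(UProd D A) ≤ #(UProd D A') := by
  refine Cardinal.mk_le_of_injective
    (f := (Quotient.map (fun f i => j i (f i))
      (fun f g hfg => hfg.mono fun i hi => by dsimp only; rw [hi]) :
        UProd D A → UProd D A')) ?_
  intro x y hxy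
  refine Quotient.inductionOn₂ x y (fun f g hfg => ?_) hxy
  exact Quotient.sound ((Quotient.exact hfg).mono fun i hi => (j i).injective hi)

lemma initSeg_le {D : Ultrafilter ι} {B : ι → Type u} [∀ i, BooleanAlgebra (B i)]
    (x : UProd D fun i => (baLengthPlus (B i)).ord.ToType) :
    #{y : UProd D fun i => (baLengthPlus (B i)).ord.ToType //
        UProd.uRel D (fun _ a b => a < b) y x} ≤ baLength (UProd D B) := by
  classical
  obtain ⟨f, rfl⟩ : ∃ f, UProd.mk D f = x := ⟨Quotient.out x, Quotient.out_eq x⟩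
  have h1 : ∀ i, ∃ X : {X : Set (B i) // IsChain (· ≤ ·) X},
      #(Set.Iio (f i)) < Order.succ #X.1 := by
    intro i
    have h0 : #(Set.Iio (f i)) < baLengthPlus (B i) := Cardinal.mk_Iio_ord_toType (f i)
    exact exists_lt_of_lt_ciSup' h0
  choose X hX using h1
  have h2 : ∀ i, Nonempty (Set.Iio (f i) ↪ (X i).1) := by
    intro i
    rw [← Cardinal.le_def]
    exact Order.lt_succ_iff.mp (hX i)
  have e : ∀ i, Set.Iio (f i) ↪ (X i).1 := fun i => (h2 i).some
  have hYchain : ∀ i, IsChain (· ≤ ·) (insert (⊥ : B i) (X i).1) := fun i =>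
    (X i).2.insert (fun b _ _ => Or.inl bot_le)
  set C : Set (UProd D B) :=
    {z | ∃ g : ∀ i, B i, (∀ i, g i ∈ insert (⊥ : B i) (X i).1) ∧ z = UProd.mk D g} with hCdef
  have hCchain : IsChain (· ≤ ·) C := by
    rintro z ⟨g, hg, rfl⟩ z' ⟨g', hg', rfl⟩ _
    have hcomp : ∀ i, g i ≤ g' i ∨ g' i ≤ g i := by
      intro i
      rcases eq_or_ne (g i) (g' i) with hh | hh
      · exact Or.inl hh.le
      · exact (hYchain i) (hg i) (hg' i) hh
    rcases D.mem_or_compl_mem {i | g i ≤ g' i} with hm | hm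
    · exact Or.inl (show ∀ᶠ i in (D : Filter ι), g i ≤ g' i from hm)
    · refine Or.inr (show ∀ᶠ i in (D : Filter ι), g' i ≤ g i from ?_)
      refine Filter.mem_of_superset hm ?_
      intro i hi
      exact (hcomp i).resolve_left hi
  have hC_le : #↥C ≤ baLength (UProd D B) :=
    le_ciSup (Cardinal.bddAbove_range
      fun X : {X : Set (UProd D B) // IsChain (· ≤ ·) X} => #X.1) ⟨C, hCchain⟩
  set φ : {y : UProd D fun i => (baLengthPlus (B i)).ord.ToType //
        UProd.uRel D (fun _ a b => a < b) y (UProd.mk D f)} → ∀ i, B i :=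
    fun y i => if h : (Quotient.out y.1) i < f i then ((e i) ⟨_, h⟩ : B i) else ⊥ with hφ
  have hφmem : ∀ y, UProd.mk D (φ y) ∈ C := by
    intro y
    refine ⟨φ y, fun i => ?_, rfl⟩
    by_cases h : (Quotient.out y.1) i < f i
    · rw [hφ]; dsimp only; rw [dif_pos h]
      exact Set.mem_insert_of_mem _ ((e i) ⟨_, h⟩).2
    · rw [hφ]; dsimp only; rw [dif_neg h]
      exact Set.mem_insert _ _
  have hinj : Function.Injective (fun y => (⟨UProd.mk D (φ y), hφmem y⟩ : ↥C)) := by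
    intro y y' hyy
    have h0 : UProd.mk D (φ y) = UProd.mk D (φ y') := congrArg Subtype.val hyy
    have h1 : ∀ᶠ i in (D : Filter ι), φ y i = φ y' i := Quotient.exact h0
    have hy : ∀ᶠ i in (D : Filter ι), (Quotient.out y.1) i < f i := by
      have h3 := y.2
      rw [← Quotient.out_eq y.1] at h3
      exact h3
    have hy' : ∀ᶠ i in (D : Filter ι), (Quotient.out y'.1) i < f i := by
      have h3 := y'.2
      rw [← Quotient.out_eq y'.1] at h3
      exact h3
    apply Subtype.ext
    rw [← Quotient.out_eq y.1, ← Quotient.out_eq y'.1]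
    refine Quotient.sound ?_
    filter_upwards [h1, hy, hy'] with i hi hlt hlt'
    rw [hφ] at hi; dsimp only at hi; rw [dif_pos hlt, dif_pos hlt'] at hi
    have h4 := (e i).injective (Subtype.coe_injective hi)
    exact congrArg Subtype.val h4
  exact (Cardinal.mk_le_of_injective hinj).trans hC_le

/-- if `|∏ Length(B_i)/D| > Length(∏ B_i/D)` then the ultraproduct of the
ordinals `Length⁺(B_i)` (with the ordinal order) is `λ`-like for some successor cardinal. -/
theorem statement_3 {ι : Type u} [Infinite ι] (D : Ultrafilter ι)
    (B : ι → Type u) [∀ i, BooleanAlgebra (B i)]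
    (h : baLength (UProd D B) < #(UProd D fun i => (baLength (B i)).out)) :
    ∃ ν : Cardinal.{u},
      IsLambdaLike
        (UProd.uRel D (B := fun i => ((baLengthPlus (B i)).ord).ToType) fun _ a b => a < b)
        (Order.succ ν) := by
  classical
  have hseg : ∀ x : UProd D fun i => (baLengthPlus (B i)).ord.ToType,
      #{y : UProd D fun i => (baLengthPlus (B i)).ord.ToType //
        UProd.uRel D (fun _ a b => a < b) y x} ≤ baLength (UProd D B) :=
    fun x => initSeg_le (B := B) x
  have hlow : Order.succ (baLength (UProd D B)) ≤
      #(UProd D fun i => (baLengthPlus (B i)).ord.ToType) := by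
    refine Order.succ_le_of_lt (lt_of_lt_of_le h ?_)
    refine UProd.mk_mono (fun i => ?_)
    have hle : baLength (B i) ≤ baLengthPlus (B i) :=
      ciSup_mono (Cardinal.bddAbove_range _) (fun X => Order.le_succ _)
    have h5 : #((baLength (B i)).out) ≤ #((baLengthPlus (B i)).ord.ToType) := by
      rwa [Cardinal.mk_out, Cardinal.mk_ord_toType]
    exact (Cardinal.le_def _ _).mp h5 |>.some
  haveI : IsIrrefl (UProd D fun i => (baLengthPlus (B i)).ord.ToType)
      (UProd.uRel D (fun _ a b => a < b)) := by
    constructor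
    intro x hxx
    induction x using UProd.ind with
    | h f =>
      obtain ⟨i, hi⟩ := (hxx : ∀ᶠ i in (D : Filter ι), f i < f i).exists
      exact absurd hi (lt_irrefl _)
  haveI : IsTrans (UProd D fun i => (baLengthPlus (B i)).ord.ToType)
      (UProd.uRel D (fun _ a b => a < b)) :=
    ⟨fun x y z => Quotient.inductionOn₃ x y z fun _ _ _ h1 h2 =>
      (h1.and h2).mono fun _ ⟨a, b⟩ => a.trans b⟩
  haveI : IsTrichotomous (UProd D fun i => (baLengthPlus (B i)).ord.ToType)
      (UProd.uRel D (fun _ a b => a < b)) := by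
    constructor
    intro x y
    refine Quotient.inductionOn₂ x y fun f g hfg hgf => ?_
    rcases D.mem_or_compl_mem {i | f i = g i} with hm | hm
    · exact Quotient.sound hm
    · rcases D.mem_or_compl_mem {i | f i < g i} with hm2 | hm2
      · exact absurd hm2 hfg
      · refine absurd ?_ hgf
        refine Filter.mem_of_superset (Filter.inter_mem hm hm2) ?_
        rintro i ⟨h1, h2⟩
        have h1' : ¬ f i = g i := h1
        have h2' : ¬ f i < g i := h2
        exact lt_of_le_of_ne (not_lt.mp h2') (fun hh => h1' hh.symm)
  have hup : #(UProd D fun i => (baLengthPlus (B i)).ord.ToType) ≤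
      Order.succ (baLength (UProd D B)) :=
    mk_le_succ_of_rel _ hseg
  exact ⟨baLength (UProd D B), le_antisymm hup hlow,
    fun x => lt_of_le_of_lt (hseg x) (Order.lt_succ _)⟩


end ShSi641
end

section
/- For every weakly inaccessible cardinal θ there exists a Boolean algebra B of cardinality θ such that for every cardinal μ < θ there is a subset X ⊆ B linearly ordered by the Boolean order with |X| = μ, while every linearly ordered subset of B has cardinality < θ; in other words, Length(B) = Length⁺(B) = θ and the supremum in the definition of Length is not attained. -/
open Cardinal Filter

universe u

namespace ShSi641

variable {ι : Type u}

/-! ### Auxiliary machinery -/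

section Aux

open Set

variable {β' : Type*} [BooleanAlgebra β']

/-- A subset of a Boolean algebra closed under all operations. -/
structure IsClosedBA (P : Set β') : Prop where
  bot_mem : ⊥ ∈ P
  top_mem : ⊤ ∈ P
  compl_mem : ∀ x ∈ P, xᶜ ∈ P
  sup_mem : ∀ x ∈ P, ∀ y ∈ P, x ⊔ y ∈ P
  inf_mem : ∀ x ∈ P, ∀ y ∈ P, x ⊓ y ∈ P

/-- The induced Boolean algebra structure on a closed subset. -/
def IsClosedBA.ba {P : Set β'} (h : IsClosedBA P) : BooleanAlgebra P :=
  letI : Max P := ⟨fun x y => ⟨x.1 ⊔ y.1, h.sup_mem _ x.2 _ y.2⟩⟩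
  letI : Min P := ⟨fun x y => ⟨x.1 ⊓ y.1, h.inf_mem _ x.2 _ y.2⟩⟩
  letI : Top P := ⟨⟨⊤, h.top_mem⟩⟩
  letI : Bot P := ⟨⟨⊥, h.bot_mem⟩⟩
  letI : Compl P := ⟨fun x => ⟨x.1ᶜ, h.compl_mem _ x.2⟩⟩
  letI : SDiff P := ⟨fun x y => ⟨x.1 ⊓ y.1ᶜ, h.inf_mem _ x.2 _ (h.compl_mem _ y.2)⟩⟩
  letI : HImp P := ⟨fun x y => ⟨y.1 ⊔ x.1ᶜ, h.sup_mem _ y.2 _ (h.compl_mem _ x.2)⟩⟩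
  Subtype.val_injective.booleanAlgebra _ Iff.rfl Iff.rfl (fun _ _ => rfl) (fun _ _ => rfl) rfl rfl (fun _ => rfl)
    (fun _ _ => sdiff_eq.symm) (fun _ _ => himp_eq.symm)

lemma IsClosedBA.le_iff {P : Set β'} (h : IsClosedBA P) {x y : P} :
    (letI := h.ba; x ≤ y) ↔ x.1 ≤ y.1 := Iff.rfl

section Block

set_option linter.unusedSectionVars false

variable {γ : Type u} [LinearOrder γ] [OrderBot γ]

/-- `F l` is the symmetric difference of the right-closed rays with endpoints in `l`. -/
def F (l : List γ) : Set γ := (l.map Set.Ici).foldr symmDiff ⊥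

lemma F_nil : F ([] : List γ) = ⊥ := rfl
lemma F_cons (a : γ) (l : List γ) : F (a :: l) = symmDiff (Set.Ici a) (F l) := rfl

lemma F_append (l m : List γ) : F (l ++ m) = symmDiff (F l) (F m) := by
  induction l with
  | nil => rw [F_nil, bot_symmDiff]; rfl
  | cons a l ih => rw [List.cons_append, F_cons, F_cons, ih, symmDiff_assoc]

lemma Ici_inf_F (a : γ) (l : List γ) :
    Set.Ici a ⊓ F l = F (l.map (fun b => a ⊔ b)) := by
  induction l with
  | nil => show Ici a ⊓ (⊥ : Set γ) = ⊥ ; rw [inf_bot_eq]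
  | cons b l ih =>
    rw [F_cons, inf_symmDiff_distrib_left, ih, List.map_cons, F_cons]
    congr 1
    rw [← Set.Ici_inter_Ici]
    rfl

/-- The interval algebra of a linear order with bottom, as a set of sets. -/
def blockSet (γ : Type u) [LinearOrder γ] [OrderBot γ] : Set (Set γ) :=
  {A | ∃ l : List γ, A = F l}

lemma F_mem (l : List γ) : F l ∈ blockSet γ := ⟨l, rfl⟩

lemma symmDiff_mem_block {A B : Set γ} (hA : A ∈ blockSet γ) (hB : B ∈ blockSet γ) :
    symmDiff A B ∈ blockSet γ := by
  obtain ⟨l, rfl⟩ := hA; obtain ⟨m, rfl⟩ := hB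
  exact ⟨l ++ m, (F_append l m).symm⟩

lemma inf_mem_block {A B : Set γ} (hA : A ∈ blockSet γ) (hB : B ∈ blockSet γ) :
    A ⊓ B ∈ blockSet γ := by
  obtain ⟨l, rfl⟩ := hA; obtain ⟨m, rfl⟩ := hB
  induction l with
  | nil => rw [F_nil, bot_inf_eq]; exact F_mem []
  | cons a l ih =>
    rw [F_cons, inf_symmDiff_distrib_right]
    exact symmDiff_mem_block (by rw [Ici_inf_F]; exact F_mem _) ih

lemma bot_mem_block : (⊥ : Set γ) ∈ blockSet γ := F_mem []

lemma top_mem_block : (⊤ : Set γ) ∈ blockSet γ := by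
  refine ⟨[⊥], ?_⟩
  rw [F_cons, F_nil, symmDiff_bot, Set.Ici_bot]
  rfl

lemma compl_mem_block {A : Set γ} (hA : A ∈ blockSet γ) : Aᶜ ∈ blockSet γ := by
  obtain ⟨l, rfl⟩ := hA
  refine ⟨⊥ :: l, ?_⟩
  rw [F_cons, Set.Ici_bot]
  rw [show (Set.univ : Set γ) = ⊤ from rfl, top_symmDiff, hnot_eq_compl]

lemma sup_mem_block {A B : Set γ} (hA : A ∈ blockSet γ) (hB : B ∈ blockSet γ) :
    A ⊔ B ∈ blockSet γ := by
  rw [← symmDiff_symmDiff_inf]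
  exact symmDiff_mem_block (symmDiff_mem_block hA hB) (inf_mem_block hA hB)

lemma Ici_mem_block (a : γ) : Set.Ici a ∈ blockSet γ :=
  ⟨[a], by rw [F_cons, F_nil, symmDiff_bot]⟩

lemma block_closed (γ : Type u) [LinearOrder γ] [OrderBot γ] : IsClosedBA (blockSet γ) :=
  ⟨bot_mem_block, top_mem_block, fun _ h => compl_mem_block h,
    fun _ h _ h' => sup_mem_block h h', fun _ h _ h' => inf_mem_block h h'⟩

lemma mk_blockSet_le : #(blockSet γ) ≤ max #γ ℵ₀ := by
  have : Nonempty γ := ⟨⊥⟩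
  rw [← mk_list_eq_max_mk_aleph0]
  exact Cardinal.mk_le_of_surjective (f := fun l : List γ => ⟨F l, F_mem l⟩)
    (fun ⟨A, l, hl⟩ => ⟨l, by simp [hl]⟩)

end Block

section Weak

variable {ι' : Type u} (Blk : ι' → Type u) [∀ i, BooleanAlgebra (Blk i)]

/-- The weak product of a family of Boolean algebras. -/
def weakSet : Set (Π i, Blk i) :=
  {f | {i | f i ≠ ⊥}.Finite ∨ {i | f i ≠ ⊤}.Finite}

lemma weak_closed : IsClosedBA (weakSet Blk) := by
  constructor
  · exact Or.inl (by simp [Set.setOf_false])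
  · exact Or.inr (by simp [Set.setOf_false])
  · rintro f (hf | hf)
    · refine Or.inr (hf.subset fun i hi => ?_)
      simp only [Set.mem_setOf_eq] at hi ⊢
      intro hb; exact hi (by show (f i)ᶜ = ⊤; rw [hb, compl_bot])
    · refine Or.inl (hf.subset fun i hi => ?_)
      simp only [Set.mem_setOf_eq] at hi ⊢
      intro hb; exact hi (by show (f i)ᶜ = ⊥; rw [hb, compl_top])
  · rintro f (hf | hf) g hg
    · rcases hg with hg | hg
      · refine Or.inl (((hf.union hg).subset) fun i hi => ?_)
        simp only [Set.mem_setOf_eq, Set.mem_union] at hi ⊢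
        by_contra hc; push_neg at hc
        exact hi (by simp [Pi.sup_apply, hc.1, hc.2])
      · refine Or.inr (hg.subset fun i hi => ?_)
        simp only [Set.mem_setOf_eq] at hi ⊢
        intro hb; exact hi (by simp [Pi.sup_apply, hb])
    · refine Or.inr (hf.subset fun i hi => ?_)
      simp only [Set.mem_setOf_eq] at hi ⊢
      intro hb; exact hi (by simp [Pi.sup_apply, hb])
  · rintro f (hf | hf) g hg
    · refine Or.inl (hf.subset fun i hi => ?_)
      simp only [Set.mem_setOf_eq] at hi ⊢
      intro hb; exact hi (by simp [Pi.inf_apply, hb])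
    · rcases hg with hg | hg
      · refine Or.inl (hg.subset fun i hi => ?_)
        simp only [Set.mem_setOf_eq] at hi ⊢
        intro hb; exact hi (by simp [Pi.inf_apply, hb])
      · refine Or.inr (((hf.union hg).subset) fun i hi => ?_)
        simp only [Set.mem_setOf_eq, Set.mem_union] at hi ⊢
        by_contra hc; push_neg at hc
        exact hi (by simp [Pi.inf_apply, hc.1, hc.2])

end Weak

lemma countable_of_comparable_finite {ι' : Type u} (R : Set (Set ι'))
    (hfin : ∀ s ∈ R, s.Finite)
    (hcomp : ∀ s ∈ R, ∀ t ∈ R, s ⊆ t ∨ t ⊆ s) : R.Countable := by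
  rw [Set.countable_iff_exists_injective]
  refine ⟨fun s => s.1.ncard, fun s t hst => ?_⟩
  have hs := hfin s.1 s.2
  have ht := hfin t.1 t.2
  apply Subtype.ext
  rcases hcomp s.1 s.2 t.1 t.2 with h | h
  · exact Set.eq_of_subset_of_ncard_le h (le_of_eq hst.symm) ht
  · exact (Set.eq_of_subset_of_ncard_le h (le_of_eq hst) hs).symm

lemma pi_small {θ : Cardinal.{u}} (hreg : θ.IsRegular) (hℵ : ℵ₀ < θ)
    {ι' : Type u} {Blk : ι' → Type u} (hBlk : ∀ i, #(Blk i) < θ)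
    (s : Set ι') (hs : s.Finite) : #(Π i : s, Blk i) < θ := by
  haveI := hs.fintype
  rw [Cardinal.mk_pi]
  have hcard : #s < ℵ₀ := lt_aleph0_of_finite _
  set c : Cardinal.{u} := max (⨆ i : s, #(Blk i.1)) ℵ₀ with hc
  have hsup : (⨆ i : s, #(Blk i.1)) < θ :=
    Cardinal.iSup_lt_of_isRegular hreg (hcard.trans hℵ) fun i => hBlk i.1
  have hcθ : c < θ := max_lt hsup hℵ
  calc Cardinal.prod (fun i : s => #(Blk i.1))
      ≤ Cardinal.prod (fun _ : s => c) :=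
        Cardinal.prod_le_prod _ _ fun i => le_trans
          (le_ciSup (Cardinal.bddAbove_range _) i) (le_max_left _ _)
    _ = c ^ #s := Cardinal.prod_const' _ _
    _ ≤ c := Cardinal.pow_le (le_max_right _ _) hcard
    _ < θ := hcθ

lemma small_of_comparable_supports {θ : Cardinal.{u}} (hreg : θ.IsRegular) (hℵ : ℵ₀ < θ)
    {ι' : Type u} {Blk : ι' → Type u} (hBlk : ∀ i, #(Blk i) < θ)
    {α : Type u} (v : α → Π i, Blk i) (X : Set α) (σ : α → Set ι')
    (hfin : ∀ f ∈ X, (σ f).Finite)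
    (hcomp : ∀ f ∈ X, ∀ g ∈ X, σ f ⊆ σ g ∨ σ g ⊆ σ f)
    (hdet : ∀ f ∈ X, ∀ g ∈ X, σ f = σ g → (∀ i ∈ σ f, v f i = v g i) → f = g) :
    #X < θ := by
  classical
  set R : Set (Set ι') := σ '' X with hR
  have hRc : R.Countable := by
    apply countable_of_comparable_finite
    · rintro s ⟨f, hf, rfl⟩; exact hfin f hf
    · rintro s ⟨f, hf, rfl⟩ t ⟨g, hg, rfl⟩; exact hcomp f hf g hg
  have hcover : X ⊆ ⋃ s ∈ R, {f | f ∈ X ∧ σ f = s} := by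
    intro f hf
    exact Set.mem_biUnion ⟨f, hf, rfl⟩ ⟨hf, rfl⟩
  have hfiber : ∀ s ∈ R, #{f | f ∈ X ∧ σ f = s} < θ := by
    rintro s ⟨f₀, hf₀, rfl⟩
    have hsf : (σ f₀).Finite := hfin f₀ hf₀
    have hinj : Function.Injective
        (fun (f : {f | f ∈ X ∧ σ f = σ f₀}) => (fun i : σ f₀ => v f.1 i.1)) := by
      rintro ⟨f, hfX, hfs⟩ ⟨g, hgX, hgs⟩ hfg
      apply Subtype.ext
      refine hdet f hfX g hgX (hfs.trans hgs.symm) fun i hi => ?_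
      exact congrFun hfg ⟨i, hfs ▸ hi⟩
    exact lt_of_le_of_lt (Cardinal.mk_le_of_injective hinj) (pi_small hreg hℵ hBlk _ hsf)
  calc #X ≤ #(⋃ s ∈ R, {f | f ∈ X ∧ σ f = s}) := Cardinal.mk_le_mk_of_subset hcover
    _ ≤ #R * ⨆ s : R, #{f | f ∈ X ∧ σ f = s.1} := Cardinal.mk_biUnion_le _ _
    _ < θ := by
      apply Cardinal.mul_lt_of_lt hreg.aleph0_le
      · exact lt_of_le_of_lt (Cardinal.mk_le_aleph0_iff.2 hRc.to_subtype) hℵ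
      · exact Cardinal.iSup_lt_of_isRegular hreg
          (lt_of_le_of_lt (Cardinal.mk_le_aleph0_iff.2 hRc.to_subtype) hℵ)
          fun s => hfiber s.1 s.2

end Aux

/-- for every weakly inaccessible `θ` there is a Boolean algebra of
cardinality `θ` with chains of every cardinality `< θ` but no chain of cardinality `θ`;
so `Length(B) = Length⁺(B) = θ` and the supremum is not attained. -/
theorem statement_6 (θ : Cardinal.{u}) (hθ : IsWeaklyInaccessible θ) :
    ∃ (B : Type u) (inst : BooleanAlgebra B),
      #B = θ ∧
      (∀ μ < θ, ∃ X : Set B, IsChain (· ≤ ·) X ∧ #X = μ) ∧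
      (∀ X : Set B, IsChain (· ≤ ·) X → #X < θ) ∧
      @baLength B inst = θ ∧ @baLengthPlus B inst = θ := by
  classical
  obtain ⟨hℵ, hreg, hlim⟩ := hθ
  let ι' : Type u := θ.ord.ToType
  let γ : ι' → Type u := fun i => WithBot ↥(Set.Iio i)
  let Blk : ι' → Type u := fun i => ↥(blockSet (γ i))
  letI instBlk : ∀ i, BooleanAlgebra (Blk i) := fun i => (block_closed (γ i)).ba
  let W : Type u := ↥(weakSet Blk)
  letI instW : BooleanAlgebra W := (weak_closed Blk).ba
  have hBlk : ∀ i, #(Blk i) < θ := by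
    intro i
    have h2 : #(Set.Iio i) < θ := Cardinal.mk_Iio_ord_toType i
    have h1 : #(γ i) < θ := by
      have : #(γ i) = #(Set.Iio i) + 1 := Cardinal.mk_option
      rw [this]
      exact Cardinal.add_lt_of_lt hreg.aleph0_le h2 (lt_trans Cardinal.one_lt_aleph0 hℵ)
    exact lt_of_le_of_lt mk_blockSet_le (max_lt h1 hℵ)
  -- long chains of every small size
  have hchainbig : ∀ μ' : Cardinal.{u}, μ' < θ → ℵ₀ ≤ μ' →
      ∃ X : Set W, IsChain (· ≤ ·) X ∧ μ' ≤ #X := by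
    intro μ' hμ' hℵμ
    haveI : IsWellOrder ι' (· < ·) := isWellOrder_lt
    have htype : μ'.ord < Ordinal.type ((· < ·) : ι' → ι' → Prop) := by
      rw [Ordinal.type_toType]; exact Cardinal.ord_lt_ord.2 hμ'
    obtain ⟨i, hi⟩ := Ordinal.typein_surj ((· < ·) : ι' → ι' → Prop) htype
    let bl : γ i → Blk i := fun a => ⟨Set.Ici a, Ici_mem_block a⟩
    have hsupp : ∀ a : γ i, {j | Function.update (⊥ : Π j, Blk j) i (bl a) j ≠ ⊥} ⊆ {i} := by
      intro a j hj
      by_contra hji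
      simp only [Set.mem_singleton_iff] at hji
      exact hj (by rw [Function.update_of_ne hji]; rfl)
    let e : γ i → W := fun a => ⟨Function.update (⊥ : Π j, Blk j) i (bl a),
      Or.inl ((Set.finite_singleton i).subset (hsupp a))⟩
    have he_le : ∀ a b : γ i, a ≤ b → e b ≤ e a := by
      intro a b hab
      have hpt : ∀ j, (e b).1 j ≤ (e a).1 j := by
        intro j
        rcases eq_or_ne j i with rfl | hji
        · show (Function.update (⊥ : Π j, Blk j) j (bl b)) j ≤
            (Function.update (⊥ : Π j, Blk j) j (bl a)) j
          rw [Function.update_self, Function.update_self]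
          show (bl b).1 ≤ (bl a).1
          exact Set.Ici_subset_Ici.2 hab
        · show (Function.update (⊥ : Π j, Blk j) i (bl b)) j ≤
            (Function.update (⊥ : Π j, Blk j) i (bl a)) j
          rw [Function.update_of_ne hji, Function.update_of_ne hji]
      exact hpt
    have he_inj : Function.Injective e := by
      intro a b hab
      have h1 : bl a = bl b := by
        have h : Function.update (⊥ : Π j, Blk j) i (bl a) i
            = Function.update (⊥ : Π j, Blk j) i (bl b) i :=
          congrFun (congrArg Subtype.val hab) i
        rwa [Function.update_self, Function.update_self] at h
      have h2 : Set.Ici a = Set.Ici b := congrArg Subtype.val h1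
      have hba : b ≤ a := by
        have : a ∈ Set.Ici b := h2 ▸ Set.self_mem_Ici
        exact this
      have hab' : a ≤ b := by
        have : b ∈ Set.Ici a := h2.symm ▸ Set.self_mem_Ici
        exact this
      exact le_antisymm hab' hba
    refine ⟨Set.range e, ?_, ?_⟩
    · rintro _ ⟨a, rfl⟩ _ ⟨b, rfl⟩ _
      rcases le_total a b with h | h
      · exact Or.inr (he_le a b h)
      · exact Or.inl (he_le b a h)
    · rw [Cardinal.mk_range_eq _ he_inj]
      have hIio : #(Set.Iio i) = μ' := by
        have h3 : #{y // y < i} = (Ordinal.typein (· < ·) i).card := Ordinal.card_typein i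
        rw [hi, Cardinal.card_ord] at h3
        exact h3
      have h4 : #(γ i) = μ' + 1 := by
        have : #(γ i) = #(Set.Iio i) + 1 := Cardinal.mk_option
        rw [this, hIio]
      rw [h4]
      exact self_le_add_right _ _
  have hchain : ∀ μ < θ, ∃ X : Set W, IsChain (· ≤ ·) X ∧ #X = μ := by
    intro μ hμ
    obtain ⟨X, hX, hle⟩ := hchainbig (max μ ℵ₀) (max_lt hμ hℵ) (le_max_right _ _)
    obtain ⟨Y, hYX, hY⟩ := Cardinal.le_mk_iff_exists_subset.1 (le_trans (le_max_left μ ℵ₀) hle)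
    exact ⟨Y, hX.mono hYX, hY⟩
  -- every chain is small
  have hsmall : ∀ X : Set W, IsChain (· ≤ ·) X → #X < θ := by
    intro X hX
    have hcompat : ∀ f ∈ X, ∀ g ∈ X, (∀ j, f.1 j ≤ g.1 j) ∨ (∀ j, g.1 j ≤ f.1 j) := by
      intro f hf g hg
      rcases eq_or_ne f g with rfl | hne
      · exact Or.inl fun j => le_rfl
      · rcases hX hf hg hne with h | h
        · exact Or.inl fun j => h j
        · exact Or.inr fun j => h j
    set X₀ : Set W := {f | f ∈ X ∧ {i | f.1 i ≠ ⊥}.Finite} with hX₀def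
    set X₁ : Set W := {f | f ∈ X ∧ ¬{i | f.1 i ≠ ⊥}.Finite} with hX₁def
    have hcover : X = X₀ ∪ X₁ := by
      ext f
      simp only [hX₀def, hX₁def, Set.mem_union, Set.mem_setOf_eq]
      tauto
    have h0 : #X₀ < θ := by
      refine small_of_comparable_supports hreg hℵ hBlk Subtype.val X₀
        (fun f => {i | f.1 i ≠ ⊥}) (fun f hf => hf.2) ?_ ?_
      · intro f hf g hg
        rcases hcompat f hf.1 g hg.1 with h | h
        · refine Or.inl fun i hi => ?_
          intro hgi
          exact hi (Subtype.ext (le_bot_iff.1 (show (f.1 i).1 ≤ ⊥ from by have := h i; rw [hgi] at this; exact this)))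
        · refine Or.inr fun i hi => ?_
          intro hfi
          exact hi (Subtype.ext (le_bot_iff.1 (show (g.1 i).1 ≤ ⊥ from by have := h i; rw [hfi] at this; exact this)))
      · intro f hf g hg hσ hval
        apply Subtype.ext
        funext i
        by_cases hi : f.1 i ≠ ⊥
        · exact hval i hi
        · push_neg at hi
          have hσ' : {i | f.1 i ≠ ⊥} = {i | g.1 i ≠ ⊥} := hσ
          have hgi : g.1 i = ⊥ := by
            by_contra hgi
            have hmem : i ∈ {i | f.1 i ≠ ⊥} := hσ' ▸ (hgi : i ∈ {i | g.1 i ≠ ⊥})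
            exact hmem hi
          rw [hi, hgi]
    have h1 : #X₁ < θ := by
      refine small_of_comparable_supports hreg hℵ hBlk Subtype.val X₁
        (fun f => {i | f.1 i ≠ ⊤}) ?_ ?_ ?_
      · intro f hf
        exact (f.2).resolve_left hf.2
      · intro f hf g hg
        rcases hcompat f hf.1 g hg.1 with h | h
        · refine Or.inr fun i hi => ?_
          intro hfi
          exact hi (Subtype.ext (top_le_iff.1 (show ⊤ ≤ (g.1 i).1 from by have := h i; rw [hfi] at this; exact this)))
        · refine Or.inl fun i hi => ?_
          intro hgi
          exact hi (Subtype.ext (top_le_iff.1 (show ⊤ ≤ (f.1 i).1 from by have := h i; rw [hgi] at this; exact this)))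
      · intro f hf g hg hσ hval
        apply Subtype.ext
        funext i
        by_cases hi : f.1 i ≠ ⊤
        · exact hval i hi
        · push_neg at hi
          have hσ' : {i | f.1 i ≠ ⊤} = {i | g.1 i ≠ ⊤} := hσ
          have hgi : g.1 i = ⊤ := by
            by_contra hgi
            have hmem : i ∈ {i | f.1 i ≠ ⊤} := hσ' ▸ (hgi : i ∈ {i | g.1 i ≠ ⊤})
            exact hmem hi
          rw [hi, hgi]
    calc #X = #(X₀ ∪ X₁ : Set W) := by rw [← hcover]
      _ ≤ #X₀ + #X₁ := Cardinal.mk_union_le _ _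
      _ < θ := Cardinal.add_lt_of_lt hreg.aleph0_le h0 h1
  -- cardinality of W
  have hι : #ι' = θ := Cardinal.mk_ord_toType θ
  haveI : Infinite ι' := Cardinal.infinite_iff.2 (by rw [hι]; exact hreg.aleph0_le)
  have hW : #W = θ := by
    apply le_antisymm
    · have hcoverW : (Set.univ : Set W) = ⋃ t : Finset ι',
          ({f : W | {i | f.1 i ≠ ⊥} = ↑t} ∪ {f : W | {i | f.1 i ≠ ⊤} = ↑t}) := by
        ext f
        simp only [Set.mem_univ, true_iff, Set.mem_iUnion, Set.mem_union, Set.mem_setOf_eq]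
        rcases f.2 with h | h
        · exact ⟨h.toFinset, Or.inl (by simp)⟩
        · exact ⟨h.toFinset, Or.inr (by simp)⟩
      have hT : ∀ t : Finset ι',
          #(({f : W | {i | f.1 i ≠ ⊥} = ↑t} ∪ {f : W | {i | f.1 i ≠ ⊤} = ↑t} : Set W)) < θ := by
        intro t
        have hA : #{f : W | {i | f.1 i ≠ ⊥} = ↑t} < θ := by
          have hinj : Function.Injective
              (fun (f : {f : W | {i | f.1 i ≠ ⊥} = ↑t}) => (fun j : (↑t : Set ι') => f.1.1 j.1)) := by
            rintro ⟨f, hf⟩ ⟨g, hg⟩ hfg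
            apply Subtype.ext
            apply Subtype.ext
            funext i
            by_cases hit : i ∈ (↑t : Set ι')
            · exact congrFun hfg ⟨i, hit⟩
            · have hfi : f.1 i = ⊥ := by
                by_contra hfi
                exact hit (hf ▸ (hfi : i ∈ {i | f.1 i ≠ ⊥}))
              have hgi : g.1 i = ⊥ := by
                by_contra hgi
                exact hit (hg ▸ (hgi : i ∈ {i | g.1 i ≠ ⊥}))
              rw [hfi, hgi]
          exact lt_of_le_of_lt (Cardinal.mk_le_of_injective hinj)
            (pi_small hreg hℵ hBlk _ t.finite_toSet)
        have hB : #{f : W | {i | f.1 i ≠ ⊤} = ↑t} < θ := by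
          have hinj : Function.Injective
              (fun (f : {f : W | {i | f.1 i ≠ ⊤} = ↑t}) => (fun j : (↑t : Set ι') => f.1.1 j.1)) := by
            rintro ⟨f, hf⟩ ⟨g, hg⟩ hfg
            apply Subtype.ext
            apply Subtype.ext
            funext i
            by_cases hit : i ∈ (↑t : Set ι')
            · exact congrFun hfg ⟨i, hit⟩
            · have hfi : f.1 i = ⊤ := by
                by_contra hfi
                exact hit (hf ▸ (hfi : i ∈ {i | f.1 i ≠ ⊤}))
              have hgi : g.1 i = ⊤ := by
                by_contra hgi
                exact hit (hg ▸ (hgi : i ∈ {i | g.1 i ≠ ⊤}))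
              rw [hfi, hgi]
          exact lt_of_le_of_lt (Cardinal.mk_le_of_injective hinj)
            (pi_small hreg hℵ hBlk _ t.finite_toSet)
        exact lt_of_le_of_lt (Cardinal.mk_union_le _ _)
          (Cardinal.add_lt_of_lt hreg.aleph0_le hA hB)
      calc #W = #(Set.univ : Set W) := Cardinal.mk_univ.symm
        _ ≤ #(Finset ι') * ⨆ t : Finset ι',
            #(({f : W | {i | f.1 i ≠ ⊥} = ↑t} ∪ {f : W | {i | f.1 i ≠ ⊤} = ↑t} : Set W)) := by
              rw [hcoverW]; exact Cardinal.mk_iUnion_le _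
        _ ≤ θ * θ := by
            apply mul_le_mul'
            · rw [Cardinal.mk_finset_of_infinite, hι]
            · exact ciSup_le' fun t => (hT t).le
        _ = θ := Cardinal.mul_eq_self hreg.aleph0_le
    · by_contra hcon
      push_neg at hcon
      have hsucc := hlim.succ_lt hcon
      obtain ⟨X, _, hXc⟩ := hchain _ hsucc
      have hle : #X ≤ #W := Cardinal.mk_set_le X
      rw [hXc] at hle
      exact (Order.lt_succ (#W)).not_ge hle
  refine ⟨W, instW, hW, hchain, hsmall, ?_, ?_⟩
  · apply le_antisymm
    · exact ciSup_le' fun X => (hsmall X.1 X.2).le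
    · by_contra hcon
      push_neg at hcon
      have hsucc := hlim.succ_lt hcon
      obtain ⟨X, hX, hXc⟩ := hchain _ hsucc
      have hle : #X ≤ baLength W :=
        le_ciSup (Cardinal.bddAbove_range _) (⟨X, hX⟩ : {X : Set W // IsChain (· ≤ ·) X})
      rw [hXc] at hle
      exact (Order.lt_succ (baLength W)).not_ge hle
  · apply le_antisymm
    · exact ciSup_le' fun X => Order.succ_le_of_lt (hsmall X.1 X.2)
    · by_contra hcon
      push_neg at hcon
      have hsucc := hlim.succ_lt hcon
      obtain ⟨X, hX, hXc⟩ := hchain _ hsucc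
      have hle : Order.succ #X ≤ baLengthPlus W :=
        le_ciSup (Cardinal.bddAbove_range _) (⟨X, hX⟩ : {X : Set W // IsChain (· ≤ ·) X})
      have hle' : #X ≤ baLengthPlus W := (Order.le_succ _).trans hle
      rw [hXc] at hle'
      exact (Order.lt_succ (baLengthPlus W)).not_ge hle'


end ShSi641
end

section
/- Let μ be an uncountable regular cardinal with 2^{<μ} = μ (equivalently, μ^{<μ} = μ), and let D be a uniform ultrafilter on μ (every member of D has cardinality μ). Then the set-ultraproduct ∏_{i<μ} 2^{|i|}/D has cardinality 2^μ, and consequently the ultrapower μ^μ/D (of the set μ, i.e. ∏_{i<μ} μ/D) also has cardinality 2^μ. -/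
open Cardinal Filter

universe u

namespace ShSi641

variable {ι : Type u}

/-- Key auxiliary lemma. -/
lemma uprod_card {μ : Cardinal.{u}} (hreg : μ.IsRegular) (hunc : Cardinal.aleph0 < μ)
    (hsmall : ∀ θ < μ, (2 : Cardinal.{u}) ^ θ ≤ μ)
    (D : Ultrafilter μ.ord.ToType) (huniform : ∀ s ∈ D, #s = μ)
    (C : μ.ord.ToType → Type u)
    (hup : ∀ i, #(C i) ≤ μ)
    (hlo : ∀ i, (2 : Cardinal.{u}) ^ #{j : μ.ord.ToType // j < i} ≤ #(C i)) :
    #(UProd D C) = 2 ^ μ := by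
  have hμinf : Cardinal.aleph0 ≤ μ := hunc.le
  have hK : #μ.ord.ToType = μ := Cardinal.mk_ord_toType μ
  -- small sets are not in D, so their complements are
  have hcompl : ∀ s : Set μ.ord.ToType, #s < μ → sᶜ ∈ D := by
    intro s hs
    rcases D.mem_or_compl_mem s with h | h
    · exact absurd (huniform s h) hs.ne
    · exact h
  -- sets of elements above α are in D
  have habove : ∀ α : μ.ord.ToType, {i : μ.ord.ToType | α < i} ∈ D := by
    intro α
    have : {i : μ.ord.ToType | α < i} = {i | i ≤ α}ᶜ := by
      ext i; simp [not_le]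
    rw [this]
    apply hcompl
    have h1 : #{i : μ.ord.ToType // i ≤ α} ≤ #{i : μ.ord.ToType // i < α} + 1 := by
      have : #(Option {i : μ.ord.ToType // i < α}) = #{i : μ.ord.ToType // i < α} + 1 := by
        simp
      rw [← this]
      refine Cardinal.mk_le_of_injective (f := fun x =>
        if h : x.1 < α then some ⟨x.1, h⟩ else none) ?_
      rintro ⟨i, hi⟩ ⟨j, hj⟩ hij
      by_cases h1 : i < α <;> by_cases h2 : j < α <;> simp [h1, h2] at hij
      · exact Subtype.ext hij
      · exact Subtype.ext ((le_antisymm hi (not_lt.1 h1)).trans (le_antisymm hj (not_lt.1 h2)).symm)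
    refine lt_of_le_of_lt h1 (Cardinal.add_lt_of_lt hμinf ?_ (one_lt_aleph0.trans hunc))
    exact Cardinal.mk_Iio_ord_toType α
  apply le_antisymm
  · -- upper bound
    calc #(UProd D C) ≤ #(∀ i, C i) := Cardinal.mk_quotient_le
      _ = Cardinal.prod fun i => #(C i) := Cardinal.mk_pi C
      _ ≤ Cardinal.prod fun _ : μ.ord.ToType => μ := Cardinal.prod_le_prod _ _ hup
      _ = μ ^ μ := by rw [Cardinal.prod_const', hK]
      _ = 2 ^ μ := Cardinal.power_self_eq hμinf
  · -- lower bound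
    have hemb : ∀ i, Nonempty (Set {j : μ.ord.ToType // j < i} ↪ C i) := by
      intro i
      rw [← Cardinal.le_def, Cardinal.mk_set]
      exact hlo i
    have e := fun i => (hemb i).some
    have hinj : Function.Injective (fun A : Set μ.ord.ToType =>
        UProd.mk D (fun i => e i {j | j.1 ∈ A})) := by
      intro A A' h
      by_contra hne
      obtain ⟨α, hα⟩ : ∃ α, α ∈ A ↔ α ∉ A' := by
        by_contra hc
        push_neg at hc
        exact hne (Set.ext fun α => by
          have := hc α; tauto)
      have hmem : {i | (fun i => e i {j | j.1 ∈ A}) i = (fun i => e i {j | j.1 ∈ A'}) i}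
          ∈ D := Quotient.exact h
      obtain ⟨i, hi1, hi2⟩ := Ultrafilter.nonempty_of_mem (D.toFilter.inter_sets hmem (habove α))
      have := congrArg (fun s => (⟨α, hi2⟩ : {j : μ.ord.ToType // j < i}) ∈ s)
        ((e i).injective hi1)
      simp only [Set.mem_setOf_eq] at this
      tauto
    have := Cardinal.mk_le_of_injective hinj
    rwa [Cardinal.mk_set, hK] at this

/-- for `μ` uncountable regular with `2^{<μ} = μ` and `D` a uniform
ultrafilter on `μ`, the ultraproduct `∏_{i<μ} 2^{|i|}/D` has cardinality `2^μ`, and hence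
so does the ultrapower `μ^μ/D`. -/
theorem statement_7 (μ : Cardinal.{u}) (hreg : μ.IsRegular) (hunc : Cardinal.aleph0 < μ)
    (hsmall : ∀ θ < μ, (2 : Cardinal.{u}) ^ θ ≤ μ)
    (D : Ultrafilter μ.ord.ToType) (huniform : ∀ s ∈ D, #s = μ) :
    #(UProd D fun i => ((2 : Cardinal.{u}) ^ #{j : μ.ord.ToType // j < i}).out) = 2 ^ μ ∧
    #(UProd D fun _ => μ.ord.ToType) = 2 ^ μ := by
  constructor
  · apply uprod_card hreg hunc hsmall D huniform
    · intro i; rw [Cardinal.mk_out]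
      exact hsmall _ (Cardinal.mk_Iio_ord_toType i)
    · intro i; rw [Cardinal.mk_out]
  · apply uprod_card hreg hunc hsmall D huniform
    · intro i; exact (Cardinal.mk_ord_toType μ).le
    · intro i; rw [Cardinal.mk_ord_toType]
      exact hsmall _ (Cardinal.mk_Iio_ord_toType i)


end ShSi641
end

section
/- For every weakly inaccessible cardinal θ there exists a Boolean algebra B of cardinality θ such that B has an antichain of every cardinality μ < θ, but every antichain of B has cardinality < θ; in other words, c(B) = c⁺(B) = θ and the supremum in the definition of cellularity is not attained. -/
open Cardinal Filter

universe u

namespace ShSi641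

variable {ι : Type u}

noncomputable section Construction

open Set


variable (θ : Cardinal.{u})

/-- Index type of cardinality `θ`. -/
abbrev CIdx : Type u := θ.ord.ToType

variable {θ} in
/-- Value type at coordinate `i`: an infinite type of cardinality `#(Iio i) + ℵ₀ < θ`. -/
abbrev CVal (i : CIdx θ) : Type u := {j : CIdx θ // j < i} ⊕ ULift.{u} ℕ

/-- The point space: the product of the value types. -/
abbrev CPt : Type u := ∀ i : CIdx θ, CVal i

variable {θ}

instance ordToTypeIsWellOrder (o : Ordinal.{u}) : IsWellOrder o.ToType (· < ·) :=
  isWellOrder_lt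

instance (i : CIdx θ) : Nonempty (CVal i) := ⟨Sum.inr ⟨0⟩⟩

instance (i : CIdx θ) : Infinite (CVal i) :=
  Infinite.of_injective Sum.inr Sum.inr_injective

/-- A set of points with finite support. -/
def CSupported (x : Set (CPt θ)) : Prop :=
  ∃ F : Finset (Σ i : CIdx θ, CVal i),
    ∀ p q : CPt θ, (∀ s ∈ F, (p s.1 = s.2 ↔ q s.1 = s.2)) → (p ∈ x ↔ q ∈ x)

theorem CSupported.union {x y : Set (CPt θ)} (hx : CSupported x) (hy : CSupported y) :
    CSupported (x ∪ y) := by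
  obtain ⟨F, hF⟩ := hx; obtain ⟨G, hG⟩ := hy
  refine ⟨F ∪ G, fun p q h => ?_⟩
  exact or_congr (hF p q fun s hs => h s (Finset.mem_union_left _ hs))
    (hG p q fun s hs => h s (Finset.mem_union_right _ hs))

theorem CSupported.inter {x y : Set (CPt θ)} (hx : CSupported x) (hy : CSupported y) :
    CSupported (x ∩ y) := by
  obtain ⟨F, hF⟩ := hx; obtain ⟨G, hG⟩ := hy
  refine ⟨F ∪ G, fun p q h => ?_⟩
  exact and_congr (hF p q fun s hs => h s (Finset.mem_union_left _ hs))
    (hG p q fun s hs => h s (Finset.mem_union_right _ hs))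

theorem CSupported.compl {x : Set (CPt θ)} (hx : CSupported x) : CSupported xᶜ := by
  obtain ⟨F, hF⟩ := hx
  exact ⟨F, fun p q h => not_congr (hF p q h)⟩

theorem CSupported.empty : CSupported (∅ : Set (CPt θ)) :=
  ⟨∅, fun _ _ _ => Iff.rfl⟩

theorem CSupported.univ : CSupported (Set.univ : Set (CPt θ)) :=
  ⟨∅, fun _ _ _ => Iff.rfl⟩

variable (θ) in
/-- The Boolean algebra of finitely supported subsets of the product space. -/
def CBA : Type u := {x : Set (CPt θ) // CSupported x}

namespace CBA

instance : Max (CBA θ) := ⟨fun x y => ⟨x.1 ∪ y.1, x.2.union y.2⟩⟩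
instance : Min (CBA θ) := ⟨fun x y => ⟨x.1 ∩ y.1, x.2.inter y.2⟩⟩
instance : Top (CBA θ) := ⟨⟨Set.univ, CSupported.univ⟩⟩
instance : Bot (CBA θ) := ⟨⟨∅, CSupported.empty⟩⟩
instance : Compl (CBA θ) := ⟨fun x => ⟨x.1ᶜ, x.2.compl⟩⟩
instance : SDiff (CBA θ) := ⟨fun x y => ⟨x.1 ∩ y.1ᶜ, x.2.inter y.2.compl⟩⟩
instance : HImp (CBA θ) := ⟨fun x y => ⟨x.1ᶜ ∪ y.1, x.2.compl.union y.2⟩⟩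

instance : LE (CBA θ) := ⟨fun x y => x.1 ⊆ y.1⟩
instance : LT (CBA θ) := ⟨fun x y => x.1 ⊂ y.1⟩

instance instBA : BooleanAlgebra (CBA θ) :=
  Function.Injective.booleanAlgebra (β := Set (CPt θ)) Subtype.val Subtype.coe_injective
    Iff.rfl Iff.rfl (fun _ _ => rfl) (fun _ _ => rfl) rfl rfl (fun _ => rfl)
    (fun _ _ => (Set.diff_eq _ _).symm) (fun _ _ => (Set.union_comm _ _).trans himp_eq.symm)

@[simp] theorem coe_inf (x y : CBA θ) : (x ⊓ y).1 = x.1 ∩ y.1 := rfl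
@[simp] theorem coe_bot : ((⊥ : CBA θ)).1 = ∅ := rfl

end CBA

/-- The cylinder set of points with `i`-th coordinate `v`. -/
def cyl (i : CIdx θ) (v : CVal i) : Set (CPt θ) := {p | p i = v}

theorem cyl_supported (i : CIdx θ) (v : CVal i) : CSupported (cyl i v) :=
  ⟨{⟨i, v⟩}, fun p q h => h ⟨i, v⟩ (Finset.mem_singleton_self _)⟩

/-- A canonical point of the cylinder. -/
def cpt (i : CIdx θ) (v : CVal i) : CPt θ :=
  fun j => if h : i = j then h ▸ v else Sum.inr ⟨0⟩

theorem cpt_mem (i : CIdx θ) (v : CVal i) : cpt i v ∈ cyl i v := by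
  simp [cpt, cyl]

/-- The element of the algebra determined by a cylinder. -/
def cylB (i : CIdx θ) (v : CVal i) : CBA θ := ⟨cyl i v, cyl_supported i v⟩

theorem cylB_injective (i : CIdx θ) : Function.Injective (cylB (θ := θ) i) := by
  intro v w h
  have hset : cyl i v = cyl i w := congrArg Subtype.val h
  have h1 : cpt i v ∈ cyl i w := hset ▸ cpt_mem i v
  have h2 := cpt_mem i v
  simp only [cyl, mem_setOf_eq] at h1 h2
  exact h2.symm.trans h1

theorem cylB_ne_bot (i : CIdx θ) (v : CVal i) : cylB i v ≠ (⊥ : CBA θ) := by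
  intro h
  have hset : cyl i v = (∅ : Set (CPt θ)) := congrArg Subtype.val h
  have := cpt_mem i v
  rw [hset] at this
  exact this

theorem cylB_disjoint (i : CIdx θ) {v w : CVal i} (hvw : v ≠ w) :
    cylB i v ⊓ cylB i w = (⊥ : CBA θ) := by
  apply Subtype.ext
  show cyl i v ∩ cyl i w = ∅
  ext p
  simp only [cyl, mem_inter_iff, mem_setOf_eq, mem_empty_iff_false, iff_false, not_and]
  intro h1 h2
  exact hvw (h1 ▸ h2 ▸ rfl)

theorem exists_antichain (hℵ : ℵ₀ < θ) {μ : Cardinal.{u}} (hμ : μ < θ) :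
    ∃ X : Set (CBA θ),
      ((∀ x ∈ X, x ≠ ⊥) ∧ X.Pairwise fun x y => x ⊓ y = ⊥) ∧ #X = μ := by
  have htype : μ.ord < Ordinal.type (α := CIdx θ) (· < ·) := by
    rw [Ordinal.type_toType]
    exact Cardinal.ord_lt_ord.2 hμ
  set i : CIdx θ := Ordinal.enum (α := CIdx θ) (· < ·) ⟨μ.ord, htype⟩ with hi
  have hcard : #{j : CIdx θ // j < i} = μ := by
    rw [← Ordinal.card_typein, hi, Ordinal.typein_enum, Cardinal.card_ord]
  have hμle : μ ≤ #(CVal i) := by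
    rw [← hcard]
    exact Cardinal.mk_le_of_injective (Sum.inl_injective)
  obtain ⟨S, hS⟩ := Cardinal.le_mk_iff_exists_set.mp hμle
  refine ⟨Set.range (fun v : S => cylB i v.1), ⟨?_, ?_⟩, ?_⟩
  · rintro x ⟨v, rfl⟩
    exact cylB_ne_bot i v.1
  · rintro x ⟨v, rfl⟩ y ⟨w, rfl⟩ hne
    refine cylB_disjoint i fun h => hne ?_
    rw [show v = w from Subtype.ext h]
  · rw [Cardinal.mk_range_eq _ (fun v w h => Subtype.ext (cylB_injective i h)), hS]

theorem mk_CVal_lt (hreg : θ.IsRegular) (hℵ : ℵ₀ < θ) (i : CIdx θ) : #(CVal i) < θ := by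
  have h1 : #{j : CIdx θ // j < i} < θ := Cardinal.mk_Iio_ord_toType i
  have h2 : #(CVal i) = #{j : CIdx θ // j < i} + ℵ₀ := by
    simp [CVal]
  rw [h2]
  exact Cardinal.add_lt_of_lt hreg.aleph0_le h1 hℵ

theorem mk_CBA_le (hreg : θ.IsRegular) (hℵ : ℵ₀ < θ) : #(CBA θ) ≤ θ := by
  classical
  have hmkΛ : #(Σ i : CIdx θ, CVal i) ≤ θ := by
    calc #(Σ i : CIdx θ, CVal i) = Cardinal.sum (fun i : CIdx θ => #(CVal i)) :=
          Cardinal.mk_sigma _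
      _ ≤ Cardinal.sum (fun _ : CIdx θ => θ) :=
          Cardinal.sum_le_sum _ _ (fun i => (mk_CVal_lt hreg hℵ i).le)
      _ = #(CIdx θ) * θ := Cardinal.sum_const' _ _
      _ = θ * θ := by rw [Cardinal.mk_ord_toType]
      _ = θ := Cardinal.mul_eq_self hreg.aleph0_le
  haveI hne : Nonempty (CIdx θ) := by
    rw [Ordinal.toType_nonempty_iff_ne_zero, Ne, Cardinal.ord_eq_zero]
    rintro rfl
    exact absurd hℵ (by simp)
  haveI : Infinite (Σ i : CIdx θ, CVal i) := by
    refine Infinite.of_injective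
      (fun n : ULift.{u} ℕ => (⟨Classical.arbitrary _, Sum.inr n⟩ : Σ i : CIdx θ, CVal i))
      (fun a b h => ?_)
    obtain ⟨-, h2⟩ := Sigma.mk.inj_iff.mp h
    exact Sum.inr_injective (heq_iff_eq.mp h2)
  -- the injection into patterns
  set pat : (F : Finset (Σ i : CIdx θ, CVal i)) → CPt θ → (↥F → Prop) :=
    fun F p s => (p s.1.1 = s.1.2) with hpat
  set Φ : CBA θ → Σ F : Finset (Σ i : CIdx θ, CVal i), Set (↥F → Prop) :=
    fun b => ⟨b.2.choose, {g | ∃ p ∈ b.1, pat _ p = g}⟩ with hΦ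
  have hΦinj : Function.Injective Φ := by
    intro b b' h
    obtain ⟨h1, h2⟩ := Sigma.mk.inj_iff.mp h
    apply Subtype.ext
    have hb := b.2.choose_spec
    have hb' := b'.2.choose_spec
    rw [← h1] at hb' h2
    have h2' : {g | ∃ p ∈ b.1, pat _ p = g} = {g | ∃ p ∈ b'.1, pat b.2.choose p = g} :=
      heq_iff_eq.mp h2
    ext p
    constructor
    · intro hp
      have : pat b.2.choose p ∈ {g | ∃ p ∈ b'.1, pat b.2.choose p = g} := by
        rw [← h2']; exact ⟨p, hp, rfl⟩
      obtain ⟨q, hq, hqp⟩ := this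
      exact (hb' q p fun s hs => iff_of_eq (congrFun hqp ⟨s, hs⟩)).mp hq
    · intro hp
      have : pat b.2.choose p ∈ {g | ∃ p ∈ b.1, pat b.2.choose p = g} := by
        rw [h2']; exact ⟨p, hp, rfl⟩
      obtain ⟨q, hq, hqp⟩ := this
      exact (hb q p fun s hs => iff_of_eq (congrFun hqp ⟨s, hs⟩)).mp hq
  calc #(CBA θ) ≤ #(Σ F : Finset (Σ i : CIdx θ, CVal i), Set (↥F → Prop)) :=
        Cardinal.mk_le_of_injective hΦinj
    _ = Cardinal.sum (fun F : Finset (Σ i : CIdx θ, CVal i) => #(Set (↥F → Prop))) :=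
        Cardinal.mk_sigma _
    _ ≤ Cardinal.sum (fun _ : Finset (Σ i : CIdx θ, CVal i) => ℵ₀) :=
        Cardinal.sum_le_sum _ _ (fun F => (Cardinal.lt_aleph0_of_finite _).le)
    _ = #(Finset (Σ i : CIdx θ, CVal i)) * ℵ₀ := Cardinal.sum_const' _ _
    _ ≤ θ * θ := by
        apply mul_le_mul'
        · rw [Cardinal.mk_finset_of_infinite]; exact hmkΛ
        · exact hℵ.le
    _ = θ := Cardinal.mul_eq_self hreg.aleph0_le
theorem deltaSystem_bounded (θ : Cardinal.{u}) (hreg : θ.IsRegular) (hℵ : ℵ₀ < θ)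
    {κ I : Type u} (n : ℕ) :
    ∀ (D : κ → Finset I) (S : Set κ), θ ≤ #S → (∀ ξ ∈ S, (D ξ).card ≤ n) →
      ∃ T ⊆ S, ∃ R : Finset I, θ ≤ #T ∧
        ∀ ξ ∈ T, ∀ η ∈ T, ξ ≠ η → ∀ y ∈ D ξ, y ∈ D η → y ∈ R := by
  classical
  induction n with
  | zero =>
    intro D S hS hcard
    refine ⟨S, le_rfl, ∅, hS, fun ξ hξ η hη _ y hy _ => ?_⟩
    have : D ξ = ∅ := Finset.card_eq_zero.mp (Nat.le_zero.mp (hcard ξ hξ))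
    simp [this] at hy
  | succ n ih =>
    intro D S hS hcard
    by_cases h : ∃ x : I, θ ≤ #{ξ : κ | ξ ∈ S ∧ x ∈ D ξ}
    · obtain ⟨x, hx⟩ := h
      obtain ⟨T, hTS, R, hT, hroot⟩ := ih (fun ξ => (D ξ).erase x)
        {ξ : κ | ξ ∈ S ∧ x ∈ D ξ} hx (fun ξ hξ => by
          have := hcard ξ hξ.1
          rw [Finset.card_erase_of_mem hξ.2]
          omega)
      refine ⟨T, fun ξ hξ => (hTS hξ).1, insert x R, hT, fun ξ hξ η hη hne y hy1 hy2 => ?_⟩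
      rcases eq_or_ne y x with rfl | hyx
      · exact Finset.mem_insert_self _ _
      · exact Finset.mem_insert_of_mem (hroot ξ hξ η hη hne y
          (Finset.mem_erase.mpr ⟨hyx, hy1⟩) (Finset.mem_erase.mpr ⟨hyx, hy2⟩))
    · push_neg at h
      -- every point is in < θ many sets; find a maximal pairwise disjoint subfamily
      obtain ⟨T, hT, hmax⟩ := zorn_subset
        {T : Set κ | T ⊆ S ∧ T.Pairwise fun ξ η => Disjoint (D ξ) (D η)}
        (fun c hc hchain => by
          refine ⟨⋃₀ c, ⟨?_, ?_⟩, fun s hs => subset_sUnion_of_mem hs⟩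
          · exact sUnion_subset fun t ht => (hc ht).1
          · intro ξ hξ η hη hne
            obtain ⟨t1, ht1, hξ1⟩ := hξ
            obtain ⟨t2, ht2, hη2⟩ := hη
            rcases eq_or_ne t1 t2 with rfl | hne12
            · exact (hc ht1).2 hξ1 hη2 hne
            · rcases hchain ht1 ht2 hne12 with h12 | h21
              · exact (hc ht2).2 (h12 hξ1) hη2 hne
              · exact (hc ht1).2 hξ1 (h21 hη2) hne)
      refine ⟨T, hT.1, ∅, ?_, fun ξ hξ η hη hne y hy1 hy2 =>
        absurd hy2 (Finset.disjoint_left.mp (hT.2 hξ hη hne) hy1)⟩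
      by_contra hTsmall
      push_neg at hTsmall
      -- U = union of the supports of the chosen family
      set U : Set I := ⋃ η : T, ↑(D η.1) with hU
      have hUlt : #U < θ := by
        rw [hU]
        rw [Cardinal.card_iUnion_lt_iff_forall_of_isRegular hreg hTsmall]
        intro i
        exact lt_of_lt_of_le ((D _).finite_toSet.lt_aleph0) hℵ.le
      have hcover : S ⊆ T ∪ ⋃ x : U, {ξ : κ | ξ ∈ S ∧ (x : I) ∈ D ξ} := by
        intro ξ hξS
        by_cases hξT : ξ ∈ T
        · exact Or.inl hξT
        · right
          have hins : ¬ (insert ξ T ∈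
              {T : Set κ | T ⊆ S ∧ T.Pairwise fun ξ η => Disjoint (D ξ) (D η)}) := by
            intro hmem
            exact hξT (hmax hmem (subset_insert _ _) (mem_insert ξ T))
          have : ¬ (insert ξ T).Pairwise fun ξ η => Disjoint (D ξ) (D η) := by
            intro hpw
            exact hins ⟨insert_subset hξS hT.1, hpw⟩
          haveI hsymm : Std.Symm (fun ξ η => Disjoint (D ξ) (D η)) := ⟨fun a b h => h.symm⟩
          rw [Set.pairwise_insert_of_symm] at this
          push_neg at this
          obtain ⟨η, hηT, hηne, hnd⟩ := this hT.2
          obtain ⟨x, hx1, hx2⟩ := Finset.not_disjoint_iff.mp hnd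
          exact mem_iUnion.mpr ⟨⟨x, mem_iUnion.mpr ⟨⟨η, hηT⟩, hx2⟩⟩, ⟨hξS, hx1⟩⟩
      have : θ ≤ #(T ∪ ⋃ x : U, {ξ : κ | ξ ∈ S ∧ (x : I) ∈ D ξ} : Set κ) :=
        hS.trans (mk_le_mk_of_subset hcover)
      have hbig : #(⋃ x : U, {ξ : κ | ξ ∈ S ∧ (x : I) ∈ D ξ}) < θ := by
        rw [Cardinal.card_iUnion_lt_iff_forall_of_isRegular hreg hUlt]
        exact fun x => h x
      exact absurd this (not_le.mpr (lt_of_le_of_lt (mk_union_le _ _)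
        (Cardinal.add_lt_of_lt hreg.aleph0_le hTsmall hbig)))

theorem deltaSystem (θ : Cardinal.{u}) (hreg : θ.IsRegular) (hℵ : ℵ₀ < θ)
    {κ I : Type u} (hκ : θ ≤ #κ) (D : κ → Finset I) :
    ∃ T : Set κ, ∃ R : Finset I, θ ≤ #T ∧
      ∀ ξ ∈ T, ∀ η ∈ T, ξ ≠ η → ∀ y ∈ D ξ, y ∈ D η → y ∈ R := by
  have hpigeon : ∃ n : ℕ, θ ≤ #{ξ : κ | (D ξ).card = n} := by
    by_contra hcon
    push_neg at hcon
    have hcov : (⋃ n : ULift.{u} ℕ, {ξ : κ | (D ξ).card = n.down}) = Set.univ := by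
      ext ξ; simp only [mem_iUnion, mem_univ, iff_true]
      exact ⟨⟨(D ξ).card⟩, rfl⟩
    have hlt : #(⋃ n : ULift.{u} ℕ, {ξ : κ | (D ξ).card = n.down}) < θ := by
      rw [Cardinal.card_iUnion_lt_iff_forall_of_isRegular hreg
        (by simpa using hℵ)]
      exact fun n => hcon n.down
    rw [hcov] at hlt
    rw [Cardinal.mk_univ] at hlt
    exact absurd hκ (not_le.mpr hlt)
  obtain ⟨n, hn⟩ := hpigeon
  obtain ⟨T, hTS, R, hT, hroot⟩ := deltaSystem_bounded θ hreg hℵ n D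
    {ξ : κ | (D ξ).card = n} hn (fun ξ hξ => le_of_eq hξ)
  exact ⟨T, R, hT, hroot⟩

theorem antichain_lt (hreg : θ.IsRegular) (hℵ : ℵ₀ < θ) (X : Set (CBA θ))
    (hne : ∀ x ∈ X, x ≠ ⊥) (hpw : X.Pairwise fun x y => x ⊓ y = ⊥) : #X < θ := by
  classical
  by_contra hcon
  push_neg at hcon
  set F : X → Finset (Σ i : CIdx θ, CVal i) := fun ξ => (ξ.1.2).choose with hF
  have hFspec : ∀ ξ : X, ∀ p q : CPt θ,
      (∀ s ∈ F ξ, (p s.1 = s.2 ↔ q s.1 = s.2)) → (p ∈ ξ.1.1 ↔ q ∈ ξ.1.1) :=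
    fun ξ => (ξ.1.2).choose_spec
  have hw : ∀ ξ : X, ∃ p, p ∈ ξ.1.1 := by
    intro ξ
    rcases Set.eq_empty_or_nonempty ξ.1.1 with h | h
    · exact absurd (Subtype.ext h) (hne ξ.1 ξ.2)
    · exact h
  choose pt hpt using hw
  set D : X → Finset (CIdx θ) := fun ξ => (F ξ).image Sigma.fst with hD
  obtain ⟨T, R, hT, hroot⟩ := deltaSystem θ hreg hℵ hcon D
  have hincomp : ∀ ξ ∈ T, ∀ η ∈ T, ξ ≠ η →
      ∃ i ∈ D ξ, i ∈ D η ∧ pt ξ i ≠ pt η i := by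
    intro ξ hξ η hη hne'
    by_contra hcomp
    push_neg at hcomp
    set q : CPt θ := fun j => if j ∈ D ξ then pt ξ j else pt η j with hq
    have hq1 : q ∈ ξ.1.1 := by
      refine (hFspec ξ q (pt ξ) fun s hs => ?_).mpr (hpt ξ)
      have : q s.1 = pt ξ s.1 := by
        rw [hq]; exact if_pos (Finset.mem_image_of_mem Sigma.fst hs)
      rw [this]
    have hq2 : q ∈ η.1.1 := by
      refine (hFspec η q (pt η) fun s hs => ?_).mpr (hpt η)
      have hsD : s.1 ∈ D η := Finset.mem_image_of_mem Sigma.fst hs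
      have : q s.1 = pt η s.1 := by
        simp only [hq]
        by_cases hmem : s.1 ∈ D ξ
        · rw [if_pos hmem]
          exact hcomp s.1 hmem hsD
        · rw [if_neg hmem]
      rw [this]
    have hvalne : ξ.1 ≠ η.1 := fun h => hne' (Subtype.ext h)
    have hdisj : ξ.1 ⊓ η.1 = ⊥ := hpw ξ.2 η.2 hvalne
    have : q ∈ (ξ.1 ⊓ η.1).1 := ⟨hq1, hq2⟩
    rw [hdisj] at this
    exact this
  -- inject `T` into a small product
  have hinj : Function.Injective
      (fun σ : T => (fun r : ↥R => pt σ.1 r.1 : ∀ r : ↥R, CVal r.1)) := by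
    intro σ τ h
    by_contra hne'
    have hvne : σ.1 ≠ τ.1 := fun h' => hne' (Subtype.ext h')
    obtain ⟨i, hi1, hi2, hptne⟩ := hincomp σ.1 σ.2 τ.1 τ.2 hvne
    have hiR : i ∈ R := hroot σ.1 σ.2 τ.1 τ.2 hvne i hi1 hi2
    exact hptne (congrFun h ⟨i, hiR⟩)
  have hle : θ ≤ #(∀ r : ↥R, CVal r.1) := hT.trans (Cardinal.mk_le_of_injective hinj)
  -- but that product is small
  set c : Cardinal.{u} := ℵ₀ ⊔ ⨆ r : ↥R, #(CVal r.1) with hc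
  have hclt : c < θ := by
    apply max_lt hℵ
    apply Cardinal.iSup_lt_of_isRegular hreg ((Cardinal.lt_aleph0_of_finite _).trans hℵ)
    exact fun r => mk_CVal_lt hreg hℵ r.1
  have hℵc : ℵ₀ ≤ c := le_sup_left
  have hprod : #(∀ r : ↥R, CVal r.1) ≤ c := by
    calc #(∀ r : ↥R, CVal r.1) = Cardinal.prod (fun r : ↥R => #(CVal r.1)) :=
          Cardinal.mk_pi _
      _ ≤ Cardinal.prod (fun _ : ↥R => c) := Cardinal.prod_le_prod _ _
          (fun r => le_sup_of_le_right (le_ciSup (Cardinal.bddAbove_range _) r))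
      _ = c ^ (#(↥R)) := Cardinal.prod_const' _ _
      _ = c ^ (R.card : Cardinal) := by rw [Cardinal.mk_coe_finset]
      _ = c ^ (R.card : ℕ) := Cardinal.power_natCast _ _
      _ ≤ c := Cardinal.power_nat_le hℵc
  exact absurd (hle.trans hprod) (not_le.mpr hclt)

theorem limit_le {a : Cardinal.{u}} (hlim : Order.IsSuccLimit θ)
    (h : ∀ μ, μ < θ → μ ≤ a) : θ ≤ a := by
  by_contra hcon
  push_neg at hcon
  have h1 : Order.succ a < θ := hlim.succ_lt hcon
  exact absurd (h _ h1) (not_le.mpr (Order.lt_succ a))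

theorem final (hθ : ℵ₀ < θ ∧ θ.IsRegular ∧ Order.IsSuccLimit θ) :
    #(CBA θ) = θ ∧
      (∀ μ < θ, ∃ X : Set (CBA θ),
        ((∀ x ∈ X, x ≠ ⊥) ∧ X.Pairwise fun x y => x ⊓ y = ⊥) ∧ #X = μ) ∧
      (∀ X : Set (CBA θ), ((∀ x ∈ X, x ≠ ⊥) ∧ X.Pairwise fun x y => x ⊓ y = ⊥) → #X < θ) := by
  obtain ⟨hℵ, hreg, hlim⟩ := hθ
  refine ⟨?_, fun μ hμ => exists_antichain hℵ hμ, fun X hX => antichain_lt hreg hℵ X hX.1 hX.2⟩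
  refine le_antisymm (mk_CBA_le hreg hℵ) (limit_le hlim fun μ hμ => ?_)
  obtain ⟨X, -, hXcard⟩ := exists_antichain (θ := θ) hℵ hμ
  exact hXcard ▸ Cardinal.mk_set_le X

end Construction

/-- for every weakly inaccessible `θ` there is a Boolean algebra of
cardinality `θ` with antichains of every cardinality `< θ` but with every antichain of
cardinality `< θ`; so `c(B) = c⁺(B) = θ` and the supremum is not attained. -/
theorem statement_11 (θ : Cardinal.{u}) (hθ : IsWeaklyInaccessible θ) :
    ∃ (B : Type u) (inst : BooleanAlgebra B),
      #B = θ ∧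
      (∀ μ < θ, ∃ X : Set B, IsBAAntichain X ∧ #X = μ) ∧
      (∀ X : Set B, IsBAAntichain X → #X < θ) ∧
      @baCellularity B inst = θ ∧ @baCellularityPlus B inst = θ := by
  obtain ⟨hℵ, hreg, hlim⟩ := hθ
  obtain ⟨hcard, hex, hbound⟩ := final (θ := θ) ⟨hℵ, hreg, hlim⟩
  haveI hne : Nonempty {X : Set (CBA θ) // IsBAAntichain X} :=
    ⟨⟨∅, ⟨fun x hx => absurd hx (Set.notMem_empty x), Set.pairwise_empty _⟩⟩⟩
  have hbound' : ∀ X : {X : Set (CBA θ) // IsBAAntichain X}, #X.1 < θ :=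
    fun X => hbound X.1 ⟨X.2.1, X.2.2⟩
  have hcell_ge : θ ≤ baCellularity (CBA θ) := by
    refine limit_le hlim fun μ hμ => ?_
    obtain ⟨X, hX, hc⟩ := hex μ hμ
    have : #X ≤ baCellularity (CBA θ) :=
      le_ciSup (Cardinal.bddAbove_range fun Y : {X : Set (CBA θ) // IsBAAntichain X} => #Y.1)
        (⟨X, ⟨hX.1, hX.2⟩⟩ : {X : Set (CBA θ) // IsBAAntichain X})
    rwa [hc] at this
  have hcell : baCellularity (CBA θ) = θ :=
    le_antisymm (ciSup_le' fun X => (hbound' X).le) hcell_ge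
  have hplus : baCellularityPlus (CBA θ) = θ := by
    refine le_antisymm (ciSup_le' fun X => Order.succ_le_of_lt (hbound' X)) ?_
    refine hcell_ge.trans (ciSup_mono ?_ fun X => Order.le_succ _)
    exact Cardinal.bddAbove_range _
  exact ⟨CBA θ, CBA.instBA, hcard,
    fun μ hμ => by
      obtain ⟨X, hX, hc⟩ := hex μ hμ
      exact ⟨X, ⟨hX.1, hX.2⟩, hc⟩,
    fun X hX => hbound X ⟨hX.1, hX.2⟩, hcell, hplus⟩

end ShSi641
end
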